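/- arXiv:math/0102173 — 2 statements merged into one kernel-verified Lean document; each statement's English description precedes it below -/
import Mathlib

section
/- Let U = Σ_{n∈ℤ} U_n t^n be a square matrix over Γ with U ≡ 1 (mod π). Then there exists a unique pair (P, N) of matrices over Γ of the form P = 1 + Σ_{n=1}^∞ A_n t^n and N = C + Σ_{n=1}^∞ B_n t^{−n}, with C a matrix over O, such that U = PN. Moreover, for ε > 0: if |U_n| < ε for all n > a, then |A_n| < ε for all n > a; and if |U_n| < ε for all n < −b, then |B_n| < ε for all n < −b. -/
open scoped Classical

/-- The base setting: `O` is a complete discrete valuation ring which is a finite totally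
ramified extension of the Witt vectors of an algebraically closed field `k` of characteristic
`p` (encoded via: complete DVR, absolute value `abv` with `abv p = 1/p`, value group
`p^(ℤ/m)`, algebraically closed residue field), equipped with a Frobenius lift `σO`;
`Γ` is the ring of series `∑ cᵢ tⁱ` (`i ∈ ℤ`, `cᵢ ∈ O`) such that for each `ε < 1` the set
`{i | |cᵢ| ≥ ε}` is bounded below, encoded via its coefficient functionals `coeff`. -/
structure GammaSetting (p : ℕ) [Fact p.Prime] where
  O : Type
  [commO : CommRing O]
  [domO : IsDomain O]
  [dvrO : IsDiscreteValuationRing O]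
  abv : O → ℝ
  abv_nonneg : ∀ x, 0 ≤ abv x
  abv_eq_zero : ∀ x, abv x = 0 ↔ x = 0
  abv_mul : ∀ x y, abv (x * y) = abv x * abv y
  abv_add_le : ∀ x y, abv (x + y) ≤ max (abv x) (abv y)
  abv_le_one : ∀ x, abv x ≤ 1
  abv_p : abv (p : O) = (p : ℝ)⁻¹
  isUnit_iff_abv : ∀ x : O, IsUnit x ↔ abv x = 1
  m : ℕ
  m_pos : 0 < m
  abv_discrete : ∀ x : O, x ≠ 0 → ∃ n : ℕ, abv x = (p : ℝ) ^ (-(n : ℝ) / (m : ℝ))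
  complete : ∀ f : ℕ → O,
    (∀ ε : ℝ, 0 < ε → ∃ N, ∀ a ≥ N, ∀ b ≥ N, abv (f a - f b) < ε) →
    ∃ x : O, ∀ ε : ℝ, 0 < ε → ∃ N, ∀ a ≥ N, abv (f a - x) < ε
  residue_algClosed : ∀ f : Polynomial O, f.Monic → 0 < f.natDegree →
    ∃ x : O, abv (Polynomial.eval x f) < 1
  σO : O ≃+* O
  abv_σO : ∀ x, abv (σO x) = abv x
  σO_frob : ∀ x : O, abv (σO x - x ^ p) < 1
  Γ : Type
  [commΓ : CommRing Γ]
  coeff : Γ → ℤ → O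
  coeff_injective : Function.Injective coeff
  coeff_add : ∀ x y i, coeff (x + y) i = coeff x i + coeff y i
  coeff_bddBelow : ∀ (x : Γ) (ε : ℝ), 0 < ε → ε < 1 →
    ∃ N : ℤ, ∀ i < N, abv (coeff x i) < ε
  coeff_surjective : ∀ f : ℤ → O,
    (∀ ε : ℝ, 0 < ε → ε < 1 → ∃ N : ℤ, ∀ i < N, abv (f i) < ε) → ∃ x, coeff x = f
  coeff_one : ∀ i, coeff 1 i = if i = 0 then 1 else 0
  t : Γ
  coeff_t : ∀ i, coeff t i = if i = 1 then 1 else 0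
  const : O →+* Γ
  coeff_const : ∀ a i, coeff (const a) i = if i = 0 then a else 0
  coeff_mul : ∀ (x y : Γ) (n : ℤ) (ε : ℝ), 0 < ε →
    ∃ S : Finset ℤ, ∀ T : Finset ℤ, S ⊆ T →
      abv (coeff (x * y) n - ∑ i ∈ T, coeff x i * coeff y (n - i)) < ε
  frobt : Γ →+* Γ
  coeff_frobt : ∀ x n, coeff (frobt x) n =
    if (p : ℤ) ∣ n then σO (coeff x (n / (p : ℤ))) else 0

attribute [instance] GammaSetting.commO GammaSetting.domO GammaSetting.dvrO GammaSetting.commΓ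

namespace GammaSetting

variable {p : ℕ} [Fact p.Prime] (S : GammaSetting p)

/-- The set of indices where the coefficient has absolute value at least `p^(-n)`. -/
def vSet (x : S.Γ) (n : ℚ) : Set ℤ :=
  {j : ℤ | (p : ℝ) ^ (-(n : ℝ)) ≤ S.abv (S.coeff x j)}

/-- The partial valuation `v_{t,n}` : the smallest `j` with `|coeff x j| ≥ p^(-n)`,
or `∞` if there is none. -/
noncomputable def v (x : S.Γ) (n : ℚ) : WithTop ℤ :=
  if h : (S.vSet x n).Nonempty then ((sInf (S.vSet x n) : ℤ) : WithTop ℤ) else ⊤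

/-- The overconvergent subring `Γ_con` (with respect to `t`), as a set. -/
def conSet : Set S.Γ :=
  {x | ∃ c d : ℝ, 0 < c ∧ 0 < d ∧ ∀ n : ℚ, 0 ≤ n → ∀ j ∈ S.vSet x n,
    -(c * (n : ℝ) + d) ≤ (j : ℝ)}

/-- The subring `Ω = O[[t]]` of `Γ`, as a set. -/
def omegaSet : Set S.Γ := {x | ∀ i : ℤ, i < 0 → S.coeff x i = 0}

/-- The Gauss norm on `Γ`. -/
noncomputable def gnorm (x : S.Γ) : ℝ := sSup (Set.range fun i => S.abv (S.coeff x i))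

end GammaSetting

namespace MPM

variable {p : ℕ} [Fact p.Prime] (S : GammaSetting p)

lemma abv_zero : S.abv 0 = 0 := (S.abv_eq_zero 0).2 rfl

lemma abv_one : S.abv 1 = 1 := by
  have h := S.abv_mul 1 1
  rw [one_mul] at h
  have h0 : S.abv 1 ≠ 0 := fun h0 => one_ne_zero ((S.abv_eq_zero 1).1 h0)
  conv_lhs at h => rw [← mul_one (S.abv 1)]
  exact (mul_left_cancel₀ h0 h).symm

lemma abv_neg (x : S.O) : S.abv (-x) = S.abv x := by
  have h1 : S.abv (-1 : S.O) = 1 := by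
    have h := S.abv_mul (-1) (-1)
    rw [neg_one_mul, neg_neg, abv_one] at h
    have h2 := S.abv_le_one (-1 : S.O)
    have h3 := S.abv_nonneg (-1 : S.O)
    nlinarith
  calc S.abv (-x) = S.abv ((-1) * x) := by rw [neg_one_mul]
  _ = S.abv x := by rw [S.abv_mul, h1, one_mul]

lemma abv_sub_le (x y : S.O) : S.abv (x - y) ≤ max (S.abv x) (S.abv y) := by
  rw [sub_eq_add_neg]
  simpa [abv_neg] using S.abv_add_le x (-y)

lemma abv_add_le_of {x y : S.O} {c : ℝ} (hx : S.abv x ≤ c) (hy : S.abv y ≤ c) :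
    S.abv (x + y) ≤ c := (S.abv_add_le x y).trans (max_le hx hy)

lemma abv_sub_le_of {x y : S.O} {c : ℝ} (hx : S.abv x ≤ c) (hy : S.abv y ≤ c) :
    S.abv (x - y) ≤ c := (abv_sub_le S x y).trans (max_le hx hy)

lemma abv_add_lt_of {x y : S.O} {c : ℝ} (hx : S.abv x < c) (hy : S.abv y < c) :
    S.abv (x + y) < c := (S.abv_add_le x y).trans_lt (max_lt hx hy)

lemma abv_sub_lt_of {x y : S.O} {c : ℝ} (hx : S.abv x < c) (hy : S.abv y < c) :
    S.abv (x - y) < c := (abv_sub_le S x y).trans_lt (max_lt hx hy)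

lemma one_lt_p : (1 : ℝ) < (p : ℝ) := by
  exact_mod_cast (Fact.out : p.Prime).one_lt

/-- The contraction constant: the largest absolute value `< 1`. -/
noncomputable def theta : ℝ := (p : ℝ) ^ (-(1 : ℝ) / (S.m : ℝ))

lemma theta_pos : 0 < theta S :=
  Real.rpow_pos_of_pos (lt_trans zero_lt_one (one_lt_p (p := p))) _

lemma theta_lt_one : theta S < 1 := by
  apply Real.rpow_lt_one_of_one_lt_of_neg (one_lt_p (p := p))
  have : (0 : ℝ) < (S.m : ℝ) := by exact_mod_cast S.m_pos
  rw [div_neg_iff]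
  right
  exact ⟨by linarith, this⟩

lemma abv_le_theta {c : S.O} (h : S.abv c < 1) : S.abv c ≤ theta S := by
  rcases eq_or_ne c 0 with rfl | hc
  · rw [abv_zero]; exact (theta_pos S).le
  · obtain ⟨n, hn⟩ := S.abv_discrete c hc
    rcases Nat.eq_zero_or_pos n with rfl | hn1
    · rw [hn] at h; simp at h
    · rw [hn]
      apply Real.rpow_le_rpow_of_exponent_le (one_lt_p (p := p)).le
      have hm : (0 : ℝ) < (S.m : ℝ) := by exact_mod_cast S.m_pos
      rw [div_le_div_iff₀ hm hm]
      have : (1 : ℝ) ≤ (n : ℝ) := by exact_mod_cast hn1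
      nlinarith

lemma abv_dvd_le_theta {π c : S.O} (hπ : Irreducible π) (h : π ∣ c) :
    S.abv c ≤ theta S := by
  apply abv_le_theta
  obtain ⟨d, rfl⟩ := h
  have hπ1 : S.abv π < 1 := by
    have := S.abv_le_one π
    rcases this.lt_or_eq with h' | h'
    · exact h'
    · exact absurd ((S.isUnit_iff_abv π).2 h') hπ.not_isUnit
  calc S.abv (π * d) = S.abv π * S.abv d := S.abv_mul π d
  _ ≤ S.abv π * 1 := by
      apply mul_le_mul_of_nonneg_left (S.abv_le_one d) (S.abv_nonneg π)
  _ < 1 := by rw [mul_one]; exact hπ1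

lemma exists_theta_pow_lt {ε : ℝ} (hε : 0 < ε) : ∃ k : ℕ, theta S ^ (k + 1) < ε := by
  obtain ⟨k, hk⟩ := exists_pow_lt_of_lt_one hε (theta_lt_one S)
  exact ⟨k, lt_of_le_of_lt (pow_le_pow_of_le_one (theta_pos S).le (theta_lt_one S).le (by omega)) hk⟩

lemma theta_pow_le_theta (k : ℕ) : theta S ^ (k + 1) ≤ theta S := by
  calc theta S ^ (k + 1) ≤ theta S ^ 1 :=
    pow_le_pow_of_le_one (theta_pos S).le (theta_lt_one S).le (by omega)
  _ = theta S := pow_one _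

lemma eq_zero_of_abv_le_theta_pow {c : S.O} (h : ∀ k : ℕ, S.abv c ≤ theta S ^ (k + 1)) :
    c = 0 := by
  by_contra hc
  have h0 : 0 < S.abv c :=
    (S.abv_nonneg c).lt_of_ne' (fun h' => hc ((S.abv_eq_zero c).1 h'))
  obtain ⟨k, hk⟩ := exists_theta_pow_lt S h0
  exact absurd (h k) (not_le.2 hk)

lemma le_of_forall_le_max {a c : ℝ} (hc : 0 ≤ c) (h : ∀ ε : ℝ, 0 < ε → a ≤ max c ε) :
    a ≤ c := by
  by_contra h'
  push_neg at h'
  have := h ((c + a) / 2) (by linarith)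
  rw [max_eq_right (by linarith)] at this
  linarith

lemma coeff_zero (n : ℤ) : S.coeff 0 n = 0 := by
  have h := S.coeff_add 0 0 n
  rw [add_zero] at h
  have h2 : S.coeff 0 n + 0 = S.coeff 0 n + S.coeff 0 n := by rw [add_zero]; exact h
  exact (add_left_cancel h2).symm

/-- The coefficient functional as an additive monoid hom. -/
def coeffHom (n : ℤ) : S.Γ →+ S.O where
  toFun := fun x => S.coeff x n
  map_zero' := coeff_zero S n
  map_add' := fun x y => S.coeff_add x y n

lemma coeff_sub (x y : S.Γ) (n : ℤ) : S.coeff (x - y) n = S.coeff x n - S.coeff y n :=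
  map_sub (coeffHom S n) x y

lemma coeff_neg (x : S.Γ) (n : ℤ) : S.coeff (-x) n = -S.coeff x n :=
  map_neg (coeffHom S n) x

lemma eq_of_coeff {x y : S.Γ} (h : ∀ n, S.coeff x n = S.coeff y n) : x = y :=
  S.coeff_injective (funext h)

lemma eq_zero_of_coeff {x : S.Γ} (h : ∀ n, S.coeff x n = 0) : x = 0 :=
  eq_of_coeff S (fun n => by rw [h n, coeff_zero])

lemma abv_sum_le {ι : Type*} (T : Finset ι) (f : ι → S.O) {c : ℝ} (hc : 0 ≤ c)
    (h : ∀ i ∈ T, S.abv (f i) ≤ c) : S.abv (∑ i ∈ T, f i) ≤ c := by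
  classical
  induction T using Finset.induction_on with
  | empty => simpa [abv_zero] using hc
  | @insert a T' hx ih =>
    rw [Finset.sum_insert hx]
    exact abv_add_le_of S (h a (Finset.mem_insert_self a T'))
      (ih (fun i hi => h i (Finset.mem_insert_of_mem hi)))

lemma abv_sum_lt {ι : Type*} (T : Finset ι) (f : ι → S.O) {ε : ℝ} (hε : 0 < ε)
    (h : ∀ i ∈ T, S.abv (f i) < ε) : S.abv (∑ i ∈ T, f i) < ε := by
  classical
  induction T using Finset.induction_on with
  | empty => simpa [abv_zero] using hε
  | @insert a T' hx ih =>
    rw [Finset.sum_insert hx]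
    exact abv_add_lt_of S (h a (Finset.mem_insert_self a T'))
      (ih (fun i hi => h i (Finset.mem_insert_of_mem hi)))

lemma coeff_mul_le {x y : S.Γ} {n : ℤ} {c : ℝ} (hc : 0 ≤ c)
    (h : ∀ i : ℤ, S.abv (S.coeff x i) * S.abv (S.coeff y (n - i)) ≤ c) :
    S.abv (S.coeff (x * y) n) ≤ c := by
  apply le_of_forall_le_max hc
  intro ε hε
  obtain ⟨T0, hT⟩ := S.coeff_mul x y n ε hε
  have h1 := hT T0 (Finset.Subset.refl T0)
  have h2 : S.abv (∑ i ∈ T0, S.coeff x i * S.coeff y (n - i)) ≤ c :=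
    abv_sum_le S T0 _ hc (fun i _ => by rw [S.abv_mul]; exact h i)
  have h3 : S.coeff (x * y) n =
      (∑ i ∈ T0, S.coeff x i * S.coeff y (n - i)) +
      (S.coeff (x * y) n - ∑ i ∈ T0, S.coeff x i * S.coeff y (n - i)) := by ring
  rw [h3]
  exact (S.abv_add_le _ _).trans (max_le_max h2 h1.le)

lemma coeff_mul_lt {x y : S.Γ} {n : ℤ} {ε : ℝ} (hε : 0 < ε)
    (h : ∀ i : ℤ, S.abv (S.coeff x i) * S.abv (S.coeff y (n - i)) < ε) :
    S.abv (S.coeff (x * y) n) < ε := by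
  obtain ⟨T0, hT⟩ := S.coeff_mul x y n ε hε
  have h1 := hT T0 (Finset.Subset.refl T0)
  have h2 : S.abv (∑ i ∈ T0, S.coeff x i * S.coeff y (n - i)) < ε :=
    abv_sum_lt S T0 _ hε (fun i _ => by rw [S.abv_mul]; exact h i)
  have h3 : S.coeff (x * y) n =
      (∑ i ∈ T0, S.coeff x i * S.coeff y (n - i)) +
      (S.coeff (x * y) n - ∑ i ∈ T0, S.coeff x i * S.coeff y (n - i)) := by ring
  rw [h3]
  exact abv_add_lt_of S h2 h1

section Matrices

variable {r : ℕ}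

lemma coeff_matmul (X Y : Matrix (Fin r) (Fin r) S.Γ) (i j : Fin r) (n : ℤ) :
    S.coeff ((X * Y) i j) n = ∑ l : Fin r, S.coeff (X i l * Y l j) n := by
  rw [Matrix.mul_apply]
  exact map_sum (coeffHom S n) _ _

lemma coeff_matmul_le {X Y : Matrix (Fin r) (Fin r) S.Γ} {i j : Fin r} {n : ℤ} {c : ℝ}
    (hc : 0 ≤ c)
    (h : ∀ l : Fin r, ∀ k : ℤ,
      S.abv (S.coeff (X i l) k) * S.abv (S.coeff (Y l j) (n - k)) ≤ c) :
    S.abv (S.coeff ((X * Y) i j) n) ≤ c := by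
  rw [coeff_matmul]
  exact abv_sum_le S _ _ hc (fun l _ => coeff_mul_le S hc (h l))

lemma coeff_matmul_lt {X Y : Matrix (Fin r) (Fin r) S.Γ} {i j : Fin r} {n : ℤ} {ε : ℝ}
    (hε : 0 < ε)
    (h : ∀ l : Fin r, ∀ k : ℤ,
      S.abv (S.coeff (X i l) k) * S.abv (S.coeff (Y l j) (n - k)) < ε) :
    S.abv (S.coeff ((X * Y) i j) n) < ε := by
  rw [coeff_matmul]
  exact abv_sum_lt S _ _ hε (fun l _ => coeff_mul_lt S hε (h l))

lemma coeff_matmul_le_of_bounds {X Y : Matrix (Fin r) (Fin r) S.Γ} {c1 c2 : ℝ}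
    (h1 : 0 ≤ c1) (h2 : 0 ≤ c2)
    (hX : ∀ i j n, S.abv (S.coeff (X i j) n) ≤ c1)
    (hY : ∀ i j n, S.abv (S.coeff (Y i j) n) ≤ c2) :
    ∀ i j n, S.abv (S.coeff ((X * Y) i j) n) ≤ c1 * c2 := by
  intro i j n
  apply coeff_matmul_le S (mul_nonneg h1 h2)
  intro l k
  exact mul_le_mul (hX i l k) (hY l j (n - k)) (S.abv_nonneg _) h1

lemma coeff_one_mat (i j : Fin r) (n : ℤ) :
    S.coeff ((1 : Matrix (Fin r) (Fin r) S.Γ) i j) n =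
      if i = j ∧ n = 0 then 1 else 0 := by
  by_cases h : i = j
  · subst h
    rw [Matrix.one_apply_eq, S.coeff_one]
    by_cases hn : n = 0 <;> simp [hn]
  · rw [Matrix.one_apply_ne h, coeff_zero]
    simp [h]

end Matrices

lemma posPart_cond (x : S.Γ) : ∀ ε : ℝ, 0 < ε → ε < 1 →
    ∃ N : ℤ, ∀ i < N, S.abv (if 1 ≤ i then S.coeff x i else 0) < ε := by
  intro ε hε hε1
  obtain ⟨N, hN⟩ := S.coeff_bddBelow x ε hε hε1
  refine ⟨N, fun i hi => ?_⟩
  by_cases h1 : 1 ≤ i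
  · rw [if_pos h1]; exact hN i hi
  · rw [if_neg h1, abv_zero]; exact hε

/-- Positive part of a series: keep only coefficients of `tⁿ`, `n ≥ 1`. -/
noncomputable def posPart (x : S.Γ) : S.Γ :=
  (S.coeff_surjective (fun i => if 1 ≤ i then S.coeff x i else 0) (posPart_cond S x)).choose

lemma coeff_posPart (x : S.Γ) (i : ℤ) :
    S.coeff (posPart S x) i = if 1 ≤ i then S.coeff x i else 0 :=
  congrFun (S.coeff_surjective (fun i => if 1 ≤ i then S.coeff x i else 0)
    (posPart_cond S x)).choose_spec i

/-- Entrywise positive part of a matrix. -/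
noncomputable def posM {r : ℕ} (X : Matrix (Fin r) (Fin r) S.Γ) :
    Matrix (Fin r) (Fin r) S.Γ := Matrix.of (fun i j => posPart S (X i j))

lemma coeff_posM {r : ℕ} (X : Matrix (Fin r) (Fin r) S.Γ) (i j : Fin r) (n : ℤ) :
    S.coeff (posM S X i j) n = if 1 ≤ n then S.coeff (X i j) n else 0 :=
  coeff_posPart S (X i j) n

lemma coeff_negM {r : ℕ} (X : Matrix (Fin r) (Fin r) S.Γ) (i j : Fin r) (n : ℤ) :
    S.coeff ((X - posM S X) i j) n = if 1 ≤ n then 0 else S.coeff (X i j) n := by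
  rw [Matrix.sub_apply, coeff_sub, coeff_posM]
  by_cases h1 : 1 ≤ n <;> simp [h1]

lemma exists_olim (f : ℕ → S.O)
    (hf : ∀ a b : ℕ, b ≤ a → S.abv (f a - f b) ≤ theta S ^ (b + 1)) :
    ∃ x : S.O, ∀ k : ℕ, S.abv (x - f k) ≤ theta S ^ (k + 1) := by
  have cauchy : ∀ ε : ℝ, 0 < ε → ∃ N, ∀ a ≥ N, ∀ b ≥ N, S.abv (f a - f b) < ε := by
    intro ε hε
    obtain ⟨K, hK⟩ := exists_theta_pow_lt S hε
    refine ⟨K, fun a ha b hb => ?_⟩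
    have key : ∀ a b : ℕ, K ≤ b → b ≤ a → S.abv (f a - f b) < ε := by
      intro a b hKb hba
      calc S.abv (f a - f b) ≤ theta S ^ (b + 1) := hf a b hba
      _ ≤ theta S ^ (K + 1) :=
        pow_le_pow_of_le_one (theta_pos S).le (theta_lt_one S).le (by omega)
      _ < ε := hK
    rcases le_total b a with h | h
    · exact key a b hb h
    · rw [← abv_neg S, neg_sub]; exact key b a ha h
  obtain ⟨x, hx⟩ := S.complete f cauchy
  refine ⟨x, fun k => ?_⟩
  apply le_of_forall_le_max (pow_nonneg (theta_pos S).le _)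
  intro ε hε
  obtain ⟨N, hN⟩ := hx ε hε
  have h1 := hN (max N k) (le_max_left N k)
  have h2 : S.abv (f (max N k) - f k) ≤ theta S ^ (k + 1) := hf _ _ (le_max_right N k)
  have h3 : x - f k = (f (max N k) - f k) - (f (max N k) - x) := by ring
  rw [h3]
  exact (abv_sub_le S _ _).trans
    (max_le (le_max_of_le_left h2) (le_max_of_le_right h1.le))

section Limits

variable {r : ℕ}

lemma telescope (F : ℕ → Matrix (Fin r) (Fin r) S.Γ)
    (h : ∀ k i j n, S.abv (S.coeff (F (k + 1) i j - F k i j) n) ≤ theta S ^ (k + 1)) :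
    ∀ a b : ℕ, b ≤ a → ∀ i j n,
      S.abv (S.coeff (F a i j - F b i j) n) ≤ theta S ^ (b + 1) := by
  intro a
  induction a with
  | zero =>
    intro b hb i j n
    interval_cases b
    simp only [sub_self, coeff_zero, abv_zero]
    exact pow_nonneg (theta_pos S).le _
  | succ a ih =>
    intro b hb i j n
    rcases Nat.lt_or_ge b (a + 1) with hba | hba
    · have hba' : b ≤ a := by omega
      have e : F (a + 1) i j - F b i j =
          (F (a + 1) i j - F a i j) + (F a i j - F b i j) := by ring
      rw [e, S.coeff_add]
      apply abv_add_le_of S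
      · exact (h a i j n).trans
          (pow_le_pow_of_le_one (theta_pos S).le (theta_lt_one S).le (by omega))
      · exact ih b hba' i j n
    · have : b = a + 1 := by omega
      subst this
      simp only [sub_self, coeff_zero, abv_zero]
      exact pow_nonneg (theta_pos S).le _

lemma exists_limM (F : ℕ → Matrix (Fin r) (Fin r) S.Γ)
    (hF : ∀ k i j n, S.abv (S.coeff (F (k + 1) i j - F k i j) n) ≤ theta S ^ (k + 1)) :
    ∃ L : Matrix (Fin r) (Fin r) S.Γ, ∀ k i j n,
      S.abv (S.coeff (L i j) n - S.coeff (F k i j) n) ≤ theta S ^ (k + 1) := by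
  have htel := telescope S F hF
  have H : ∀ (i j : Fin r) (n : ℤ), ∃ x : S.O,
      ∀ k : ℕ, S.abv (x - S.coeff (F k i j) n) ≤ theta S ^ (k + 1) := by
    intro i j n
    apply exists_olim S (fun k => S.coeff (F k i j) n)
    intro a b hba
    have := htel a b hba i j n
    rwa [coeff_sub] at this
  choose g hg using H
  have H2 : ∀ i j : Fin r, ∃ y : S.Γ, S.coeff y = g i j := by
    intro i j
    apply S.coeff_surjective
    intro ε hε hε1
    obtain ⟨K, hK⟩ := exists_theta_pow_lt S hε
    obtain ⟨N, hN⟩ := S.coeff_bddBelow (F K i j) ε hε hε1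
    refine ⟨N, fun n hn => ?_⟩
    have h1 := hg i j n K
    have h2 := hN n hn
    have e : g i j n = (g i j n - S.coeff (F K i j) n) + S.coeff (F K i j) n := by ring
    rw [e]
    exact abv_add_lt_of S (lt_of_le_of_lt h1 hK) h2
  choose L hL using H2
  refine ⟨Matrix.of L, fun k i j n => ?_⟩
  have : S.coeff (Matrix.of L i j) n = g i j n := by rw [Matrix.of_apply, hL i j]
  rw [this]
  exact hg i j n k

end Limits

section ShapeNorm

variable {r : ℕ}

/-- If `U = P·N` with `U ≡ 1 (mod m)`, `P = 1 + (positive part)` and `N` has only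
nonpositive coefficients, then `P ≡ 1` and `N ≡ 1` modulo the maximal ideal. -/
lemma shape_norm (U P N : Matrix (Fin r) (Fin r) S.Γ)
    (hU1 : ∀ i j n, S.abv (S.coeff ((U - 1) i j) n) < 1)
    (hP : ∀ i j, ∀ n : ℤ, n ≤ 0 → S.coeff ((P - 1) i j) n = 0)
    (hN : ∀ i j, ∀ n : ℤ, 0 < n → S.coeff (N i j) n = 0)
    (hUPN : U = P * N) :
    (∀ i j n, S.abv (S.coeff ((P - 1) i j) n) < 1) ∧
    (∀ i j n, S.abv (S.coeff ((N - 1) i j) n) < 1) := by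
  have hY_shape : ∀ (i j : Fin r) (n : ℤ), 0 < n → S.coeff ((N - 1) i j) n = 0 := by
    intro i j n hn
    rw [Matrix.sub_apply, coeff_sub, hN i j n hn, coeff_one_mat]
    simp [show ¬(n = 0) by omega]
  have hE : U - 1 = (P - 1) + (N - 1) + (P - 1) * (N - 1) := by
    rw [hUPN]; noncomm_ring
  have hEc : ∀ (i j : Fin r) (n : ℤ), S.coeff ((U - 1) i j) n =
      S.coeff ((P - 1) i j) n + S.coeff ((N - 1) i j) n +
      S.coeff (((P - 1) * (N - 1)) i j) n := by
    intro i j n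
    rw [hE]
    rw [Matrix.add_apply, Matrix.add_apply, S.coeff_add, S.coeff_add]
  -- lower bound for the coefficients of N - 1
  have hM : ∃ M : ℤ, ∀ n : ℤ, n < M → ∀ i j : Fin r,
      S.abv (S.coeff ((N - 1) i j) n) < 1 := by
    have h1 : ∀ ij : Fin r × Fin r, ∃ Mij : ℤ, ∀ n < Mij,
        S.abv (S.coeff ((N - 1) ij.1 ij.2) n) < (1 : ℝ) / 2 :=
      fun ij => S.coeff_bddBelow _ ((1 : ℝ) / 2) (by norm_num) (by norm_num)
    choose Mf hMf using h1
    rcases isEmpty_or_nonempty (Fin r × Fin r) with he | hne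
    · exact ⟨0, fun n _ i j => (IsEmpty.false (i, j)).elim⟩
    · refine ⟨Finset.univ.inf' Finset.univ_nonempty Mf, fun n hn i j => ?_⟩
      have h2 : Finset.univ.inf' Finset.univ_nonempty Mf ≤ Mf (i, j) :=
        Finset.inf'_le Mf (Finset.mem_univ (i, j))
      have := hMf (i, j) n (lt_of_lt_of_le hn h2)
      linarith
  obtain ⟨M, hM⟩ := hM
  have main : ∀ n : ℤ,
      (∀ m : ℤ, m < n → ∀ i j, S.abv (S.coeff ((N - 1) i j) m) < 1) →
      ∀ i j, S.abv (S.coeff ((N - 1) i j) n) < 1 := by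
    intro n IH i j
    rcases lt_or_ge 0 n with hn | hn
    · rw [hY_shape i j n hn, abv_zero]; exact one_pos
    · have h1 : S.coeff ((N - 1) i j) n =
          S.coeff ((U - 1) i j) n - S.coeff (((P - 1) * (N - 1)) i j) n := by
        have := hEc i j n
        rw [hP i j n hn] at this
        rw [this]; ring
      rw [h1]
      apply abv_sub_lt_of S (hU1 i j n)
      apply coeff_matmul_lt S one_pos
      intro l k
      rcases le_or_gt k 0 with hk | hk
      · rw [hP i l k hk, abv_zero, zero_mul]; exact one_pos
      · have h2 : n - k < n := by omega
        calc S.abv (S.coeff ((P - 1) i l) k) * S.abv (S.coeff ((N - 1) l j) (n - k))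
            ≤ 1 * S.abv (S.coeff ((N - 1) l j) (n - k)) :=
          mul_le_mul_of_nonneg_right (S.abv_le_one _) (S.abv_nonneg _)
        _ = S.abv (S.coeff ((N - 1) l j) (n - k)) := one_mul _
        _ < 1 := IH (n - k) h2 l j
  have QY : ∀ (n : ℤ) (i j : Fin r), S.abv (S.coeff ((N - 1) i j) n) < 1 := by
    have aux : ∀ d : ℕ, ∀ n : ℤ, n < M + d → ∀ i j,
        S.abv (S.coeff ((N - 1) i j) n) < 1 := by
      intro d
      induction d with
      | zero => intro n hn i j; exact hM n (by omega) i j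
      | succ d ihd =>
        intro n hn i j
        rcases lt_or_ge n (M + d) with h | h
        · exact ihd n h i j
        · exact main n (fun m hm i' j' => ihd m (by omega) i' j') i j
    intro n i j
    exact aux (n - M + 1).toNat n (by omega) i j
  refine ⟨?_, fun i j n => QY n i j⟩
  intro i j n
  rcases le_or_gt n 0 with hn | hn
  · rw [hP i j n hn, abv_zero]; exact one_pos
  · have h1 : S.coeff ((P - 1) i j) n =
        S.coeff ((U - 1) i j) n - S.coeff ((N - 1) i j) n
          - S.coeff (((P - 1) * (N - 1)) i j) n := by
      have := hEc i j n
      rw [this]; ring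
    rw [h1]
    apply abv_sub_lt_of S (abv_sub_lt_of S (hU1 i j n) (QY n i j))
    apply coeff_matmul_lt S one_pos
    intro l k
    rcases le_or_gt k 0 with hk | hk
    · rw [hP i l k hk, abv_zero, zero_mul]; exact one_pos
    · calc S.abv (S.coeff ((P - 1) i l) k) * S.abv (S.coeff ((N - 1) l j) (n - k))
          ≤ 1 * S.abv (S.coeff ((N - 1) l j) (n - k)) :=
        mul_le_mul_of_nonneg_right (S.abv_le_one _) (S.abv_nonneg _)
      _ = S.abv (S.coeff ((N - 1) l j) (n - k)) := one_mul _
      _ < 1 := QY (n - k) l j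

end ShapeNorm

section Uniqueness

variable {r : ℕ}

lemma uniqueness (U P N P' N' : Matrix (Fin r) (Fin r) S.Γ)
    (hU1 : ∀ i j n, S.abv (S.coeff ((U - 1) i j) n) < 1)
    (hP : ∀ i j, ∀ n : ℤ, n ≤ 0 → S.coeff ((P - 1) i j) n = 0)
    (hN : ∀ i j, ∀ n : ℤ, 0 < n → S.coeff (N i j) n = 0)
    (hP' : ∀ i j, ∀ n : ℤ, n ≤ 0 → S.coeff ((P' - 1) i j) n = 0)
    (hN' : ∀ i j, ∀ n : ℤ, 0 < n → S.coeff (N' i j) n = 0)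
    (hUPN : U = P * N) (hUPN' : U = P' * N') :
    P' = P ∧ N' = N := by
  obtain ⟨_, hNn⟩ := shape_norm S U P N hU1 hP hN hUPN
  obtain ⟨hPn', _⟩ := shape_norm S U P' N' hU1 hP' hN' hUPN'
  have hNθ : ∀ i j n, S.abv (S.coeff ((N - 1) i j) n) ≤ theta S :=
    fun i j n => abv_le_theta S (hNn i j n)
  have hPθ' : ∀ i j n, S.abv (S.coeff ((P' - 1) i j) n) ≤ theta S :=
    fun i j n => abv_le_theta S (hPn' i j n)
  have h0 : (P' - P) * N + P' * (N' - N) = 0 := by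
    have e : (P' - P) * N + P' * (N' - N) = P' * N' - P * N := by noncomm_ring
    rw [e, ← hUPN, ← hUPN', sub_self]
  have hid : (P' - P) + (N' - N) = -((P' - P) * (N - 1) + (P' - 1) * (N' - N)) := by
    have h2 : ((P' - P) + (N' - N)) + ((P' - P) * (N - 1) + (P' - 1) * (N' - N)) =
        (P' - P) * N + P' * (N' - N) := by noncomm_ring
    rw [h0] at h2
    exact eq_neg_of_add_eq_zero_left h2
  have hXz : ∀ (i j : Fin r) (n : ℤ), n ≤ 0 → S.coeff ((P' - P) i j) n = 0 := by
    intro i j n hn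
    have e : (P' - P) i j = (P' - 1) i j - (P - 1) i j := by
      simp only [Matrix.sub_apply]; ring
    rw [e, coeff_sub, hP' i j n hn, hP i j n hn, sub_zero]
  have hYz : ∀ (i j : Fin r) (n : ℤ), 0 < n → S.coeff ((N' - N) i j) n = 0 := by
    intro i j n hn
    rw [Matrix.sub_apply, coeff_sub, hN' i j n hn, hN i j n hn, sub_zero]
  have bnd : ∀ k : ℕ, ∀ (i j : Fin r) (n : ℤ),
      S.abv (S.coeff ((P' - P) i j) n) ≤ theta S ^ k ∧
      S.abv (S.coeff ((N' - N) i j) n) ≤ theta S ^ k := by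
    intro k
    induction k with
    | zero =>
      intro i j n
      rw [pow_zero]
      exact ⟨S.abv_le_one _, S.abv_le_one _⟩
    | succ k ih =>
      have key : ∀ (i j : Fin r) (n : ℤ),
          S.abv (S.coeff ((P' - P) i j) n + S.coeff ((N' - N) i j) n) ≤
            theta S ^ (k + 1) := by
        intro i j n
        have e1 : S.coeff ((P' - P) i j) n + S.coeff ((N' - N) i j) n =
            S.coeff (((P' - P) + (N' - N)) i j) n := by
          rw [Matrix.add_apply, S.coeff_add]
        rw [e1, hid, Matrix.neg_apply, coeff_neg, abv_neg, Matrix.add_apply, S.coeff_add]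
        apply abv_add_le_of S
        · have h3 := coeff_matmul_le_of_bounds S
            (pow_nonneg (theta_pos S).le k) (theta_pos S).le
            (fun i j n => (ih i j n).1) hNθ i j n
          rwa [← pow_succ] at h3
        · have h3 := coeff_matmul_le_of_bounds S
            (theta_pos S).le (pow_nonneg (theta_pos S).le k)
            hPθ' (fun i j n => (ih i j n).2) i j n
          rwa [← pow_succ'] at h3
      intro i j n
      rcases le_or_gt n 0 with hn | hn
      · constructor
        · rw [hXz i j n hn, abv_zero]; exact pow_nonneg (theta_pos S).le _
        · have h4 := key i j n; rwa [hXz i j n hn, zero_add] at h4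
      · constructor
        · have h4 := key i j n; rwa [hYz i j n hn, add_zero] at h4
        · rw [hYz i j n hn, abv_zero]; exact pow_nonneg (theta_pos S).le _
  have hX0 : P' - P = 0 := by
    ext i j
    rw [Matrix.zero_apply]
    apply eq_zero_of_coeff S
    intro n
    apply eq_zero_of_abv_le_theta_pow S
    intro k
    exact (bnd (k + 1) i j n).1
  have hY0 : N' - N = 0 := by
    ext i j
    rw [Matrix.zero_apply]
    apply eq_zero_of_coeff S
    intro n
    apply eq_zero_of_abv_le_theta_pow S
    intro k
    exact (bnd (k + 1) i j n).2
  exact ⟨sub_eq_zero.mp hX0, sub_eq_zero.mp hY0⟩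

end Uniqueness

section Iteration

variable {r : ℕ}

/-- One step of the successive approximation. -/
noncomputable def stepPN (U : Matrix (Fin r) (Fin r) S.Γ)
    (q : Matrix (Fin r) (Fin r) S.Γ × Matrix (Fin r) (Fin r) S.Γ) :
    Matrix (Fin r) (Fin r) S.Γ × Matrix (Fin r) (Fin r) S.Γ :=
  (q.1 + posM S (U - q.1 * q.2),
   q.2 + ((U - q.1 * q.2) - posM S (U - q.1 * q.2)))

/-- The successive approximation sequence, starting from `(1, 1)`. -/
noncomputable def seqPN (U : Matrix (Fin r) (Fin r) S.Γ) :
    ℕ → Matrix (Fin r) (Fin r) S.Γ × Matrix (Fin r) (Fin r) S.Γ :=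
  fun k => (stepPN S U)^[k] (1, 1)

lemma seqPN_zero (U : Matrix (Fin r) (Fin r) S.Γ) : seqPN S U 0 = (1, 1) := rfl

lemma seqPN_succ (U : Matrix (Fin r) (Fin r) S.Γ) (k : ℕ) :
    seqPN S U (k + 1) = stepPN S U (seqPN S U k) :=
  Function.iterate_succ_apply' (stepPN S U) k (1, 1)

lemma step_error (U P N Dp : Matrix (Fin r) (Fin r) S.Γ) :
    U - (P + Dp) * (N + ((U - P * N) - Dp)) =
    -((P - 1) * ((U - P * N) - Dp) + Dp * (N - 1) + Dp * ((U - P * N) - Dp)) := by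
  noncomm_ring

lemma invariant (U : Matrix (Fin r) (Fin r) S.Γ)
    (hU1 : ∀ i j n, S.abv (S.coeff ((U - 1) i j) n) ≤ theta S) (k : ℕ) :
    (∀ i j, ∀ n : ℤ, n ≤ 0 → S.coeff (((seqPN S U k).1 - 1) i j) n = 0) ∧
    (∀ i j, ∀ n : ℤ, 0 < n → S.coeff ((seqPN S U k).2 i j) n = 0) ∧
    (∀ i j n, S.abv (S.coeff (((seqPN S U k).1 - 1) i j) n) ≤ theta S) ∧
    (∀ i j n, S.abv (S.coeff (((seqPN S U k).2 - 1) i j) n) ≤ theta S) ∧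
    (∀ i j n, S.abv (S.coeff ((U - (seqPN S U k).1 * (seqPN S U k).2) i j) n) ≤
      theta S ^ (k + 1)) := by
  induction k with
  | zero =>
    rw [seqPN_zero]
    refine ⟨?_, ?_, ?_, ?_, ?_⟩
    · intro i j n _
      rw [sub_self, Matrix.zero_apply, coeff_zero]
    · intro i j n hn
      rw [coeff_one_mat]
      simp [show ¬(n = 0) by omega]
    · intro i j n
      rw [sub_self, Matrix.zero_apply, coeff_zero, abv_zero]
      exact (theta_pos S).le
    · intro i j n
      rw [sub_self, Matrix.zero_apply, coeff_zero, abv_zero]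
      exact (theta_pos S).le
    · intro i j n
      rw [one_mul, pow_one]
      exact hU1 i j n
  | succ k ih =>
    obtain ⟨ih1, ih2, ih3, ih4, ih5⟩ := ih
    set P := (seqPN S U k).1 with hP
    set N := (seqPN S U k).2 with hN
    set D := U - P * N with hD
    set Dp := posM S D with hDp
    have hs : seqPN S U (k + 1) = (P + Dp, N + (D - Dp)) := by
      rw [seqPN_succ]; rfl
    have hDpc : ∀ (i j : Fin r) (n : ℤ),
        S.coeff (Dp i j) n = if 1 ≤ n then S.coeff (D i j) n else 0 :=
      fun i j n => coeff_posM S D i j n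
    have hDmc : ∀ (i j : Fin r) (n : ℤ),
        S.coeff ((D - Dp) i j) n = if 1 ≤ n then 0 else S.coeff (D i j) n :=
      fun i j n => coeff_negM S D i j n
    have hDpb : ∀ (i j : Fin r) (n : ℤ),
        S.abv (S.coeff (Dp i j) n) ≤ theta S ^ (k + 1) := by
      intro i j n
      rw [hDpc]
      by_cases h1 : 1 ≤ n
      · rw [if_pos h1]; exact ih5 i j n
      · rw [if_neg h1, abv_zero]; exact pow_nonneg (theta_pos S).le _
    have hDmb : ∀ (i j : Fin r) (n : ℤ),
        S.abv (S.coeff ((D - Dp) i j) n) ≤ theta S ^ (k + 1) := by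
      intro i j n
      rw [hDmc]
      by_cases h1 : 1 ≤ n
      · rw [if_pos h1, abv_zero]; exact pow_nonneg (theta_pos S).le _
      · rw [if_neg h1]; exact ih5 i j n
    have hDpθ : ∀ (i j : Fin r) (n : ℤ), S.abv (S.coeff (Dp i j) n) ≤ theta S :=
      fun i j n => (hDpb i j n).trans (theta_pow_le_theta S k)
    have hDmθ : ∀ (i j : Fin r) (n : ℤ), S.abv (S.coeff ((D - Dp) i j) n) ≤ theta S :=
      fun i j n => (hDmb i j n).trans (theta_pow_le_theta S k)
    rw [hs]
    dsimp only
    have eP : (P + Dp - 1 : Matrix (Fin r) (Fin r) S.Γ) = (P - 1) + Dp := by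
      noncomm_ring
    have eN : (N + (D - Dp) - 1 : Matrix (Fin r) (Fin r) S.Γ) = (N - 1) + (D - Dp) := by
      noncomm_ring
    refine ⟨?_, ?_, ?_, ?_, ?_⟩
    · intro i j n hn
      rw [eP, Matrix.add_apply, S.coeff_add, ih1 i j n hn, hDpc,
        if_neg (by omega : ¬(1 ≤ n)), add_zero]
    · intro i j n hn
      rw [Matrix.add_apply, S.coeff_add, ih2 i j n hn, hDmc,
        if_pos (by omega : (1 : ℤ) ≤ n), add_zero]
    · intro i j n
      rw [eP, Matrix.add_apply, S.coeff_add]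
      exact abv_add_le_of S (ih3 i j n) (hDpθ i j n)
    · intro i j n
      rw [eN, Matrix.add_apply, S.coeff_add]
      exact abv_add_le_of S (ih4 i j n) (hDmθ i j n)
    · intro i j n
      have herr := step_error S U P N Dp
      rw [← hD] at herr
      rw [herr, Matrix.neg_apply, coeff_neg, abv_neg, Matrix.add_apply,
        Matrix.add_apply, S.coeff_add, S.coeff_add]
      have hb1 : S.abv (S.coeff (((P - 1) * (D - Dp)) i j) n) ≤ theta S ^ (k + 2) := by
        have h3 := coeff_matmul_le_of_bounds S (theta_pos S).le
          (pow_nonneg (theta_pos S).le (k + 1)) ih3 hDmb i j n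
        rwa [← pow_succ'] at h3
      have hb2 : S.abv (S.coeff ((Dp * (N - 1)) i j) n) ≤ theta S ^ (k + 2) := by
        have h3 := coeff_matmul_le_of_bounds S
          (pow_nonneg (theta_pos S).le (k + 1)) (theta_pos S).le hDpb ih4 i j n
        rwa [← pow_succ] at h3
      have hb3 : S.abv (S.coeff ((Dp * (D - Dp)) i j) n) ≤ theta S ^ (k + 2) := by
        have h3 := coeff_matmul_le_of_bounds S (theta_pos S).le
          (pow_nonneg (theta_pos S).le (k + 1)) hDpθ hDmb i j n
        rwa [← pow_succ'] at h3
      exact abv_add_le_of S (abv_add_le_of S hb1 hb2) hb3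

end Iteration

section EpsBounds

variable {r : ℕ}

lemma eps_pos (U : Matrix (Fin r) (Fin r) S.Γ)
    (hU1 : ∀ i j n, S.abv (S.coeff ((U - 1) i j) n) ≤ theta S)
    {ε : ℝ} {a : ℤ} (hε : 0 < ε) (ha : 0 ≤ a)
    (hyp : ∀ n : ℤ, a < n → ∀ i j, S.abv (S.coeff (U i j) n) < ε) (k : ℕ) :
    (∀ n : ℤ, a < n → ∀ i j,
      S.abv (S.coeff ((U - (seqPN S U k).1 * (seqPN S U k).2) i j) n) < ε) ∧
    (∀ n : ℤ, a < n → ∀ i j,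
      S.abv (S.coeff (((seqPN S U k).1 - 1) i j) n) < ε) := by
  induction k with
  | zero =>
    rw [seqPN_zero]
    constructor
    · intro n hn i j
      rw [one_mul, Matrix.sub_apply, coeff_sub, coeff_one_mat,
        if_neg (by push_neg; intro _; omega), sub_zero]
      exact hyp n hn i j
    · intro n hn i j
      rw [sub_self, Matrix.zero_apply, coeff_zero, abv_zero]
      exact hε
  | succ k ih =>
    obtain ⟨ih1, ih2⟩ := ih
    obtain ⟨inv1, inv2, inv3, inv4, inv5⟩ := invariant S U hU1 k
    set P := (seqPN S U k).1 with hP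
    set N := (seqPN S U k).2 with hN
    set D := U - P * N with hD
    set Dp := posM S D with hDp
    have hs : seqPN S U (k + 1) = (P + Dp, N + (D - Dp)) := by
      rw [seqPN_succ]; rfl
    have hDpc : ∀ (i j : Fin r) (n : ℤ),
        S.coeff (Dp i j) n = if 1 ≤ n then S.coeff (D i j) n else 0 :=
      fun i j n => coeff_posM S D i j n
    have hDmc : ∀ (i j : Fin r) (n : ℤ),
        S.coeff ((D - Dp) i j) n = if 1 ≤ n then 0 else S.coeff (D i j) n :=
      fun i j n => coeff_negM S D i j n
    rw [hs]
    dsimp only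
    constructor
    · intro n hn i j
      have herr := step_error S U P N Dp
      rw [← hD] at herr
      rw [herr, Matrix.neg_apply, coeff_neg, abv_neg, Matrix.add_apply,
        Matrix.add_apply, S.coeff_add, S.coeff_add]
      have hb1 : S.abv (S.coeff (((P - 1) * (D - Dp)) i j) n) < ε := by
        apply coeff_matmul_lt S hε
        intro l k'
        rcases le_or_gt k' 0 with hk | hk
        · rw [inv1 i l k' hk, abv_zero, zero_mul]; exact hε
        · rcases le_or_gt k' a with hka | hka
          · rw [hDmc, if_pos (by omega : (1 : ℤ) ≤ n - k'), abv_zero, mul_zero]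
            exact hε
          · calc S.abv (S.coeff ((P - 1) i l) k') * S.abv (S.coeff ((D - Dp) l j) (n - k'))
                ≤ S.abv (S.coeff ((P - 1) i l) k') * 1 :=
              mul_le_mul_of_nonneg_left (S.abv_le_one _) (S.abv_nonneg _)
            _ = S.abv (S.coeff ((P - 1) i l) k') := mul_one _
            _ < ε := ih2 k' hka i l
      have hb2 : S.abv (S.coeff ((Dp * (N - 1)) i j) n) < ε := by
        apply coeff_matmul_lt S hε
        intro l k'
        rcases le_or_gt k' 0 with hk | hk
        · rw [hDpc, if_neg (by omega : ¬(1 : ℤ) ≤ k'), abv_zero, zero_mul]; exact hε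
        · rcases le_or_gt k' a with hka | hka
          · have h1 : S.coeff ((N - 1) l j) (n - k') = 0 := by
              rw [Matrix.sub_apply, coeff_sub, inv2 l j (n - k') (by omega),
                coeff_one_mat, if_neg (by push_neg; intro _; omega), sub_zero]
            rw [h1, abv_zero, mul_zero]; exact hε
          · have h1 : S.abv (S.coeff (Dp i l) k') < ε := by
              rw [hDpc, if_pos (by omega : (1 : ℤ) ≤ k')]
              exact ih1 k' hka i l
            calc S.abv (S.coeff (Dp i l) k') * S.abv (S.coeff ((N - 1) l j) (n - k'))
                ≤ S.abv (S.coeff (Dp i l) k') * 1 :=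
              mul_le_mul_of_nonneg_left (S.abv_le_one _) (S.abv_nonneg _)
            _ = S.abv (S.coeff (Dp i l) k') := mul_one _
            _ < ε := h1
      have hb3 : S.abv (S.coeff ((Dp * (D - Dp)) i j) n) < ε := by
        apply coeff_matmul_lt S hε
        intro l k'
        rcases le_or_gt k' 0 with hk | hk
        · rw [hDpc, if_neg (by omega : ¬(1 : ℤ) ≤ k'), abv_zero, zero_mul]; exact hε
        · rcases le_or_gt k' a with hka | hka
          · rw [hDmc, if_pos (by omega : (1 : ℤ) ≤ n - k'), abv_zero, mul_zero]
            exact hε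
          · have h1 : S.abv (S.coeff (Dp i l) k') < ε := by
              rw [hDpc, if_pos (by omega : (1 : ℤ) ≤ k')]
              exact ih1 k' hka i l
            calc S.abv (S.coeff (Dp i l) k') * S.abv (S.coeff ((D - Dp) l j) (n - k'))
                ≤ S.abv (S.coeff (Dp i l) k') * 1 :=
              mul_le_mul_of_nonneg_left (S.abv_le_one _) (S.abv_nonneg _)
            _ = S.abv (S.coeff (Dp i l) k') := mul_one _
            _ < ε := h1
      exact abv_add_lt_of S (abv_add_lt_of S hb1 hb2) hb3
    · intro n hn i j
      have eP : (P + Dp - 1 : Matrix (Fin r) (Fin r) S.Γ) = (P - 1) + Dp := by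
        noncomm_ring
      rw [eP, Matrix.add_apply, S.coeff_add]
      apply abv_add_lt_of S (ih2 n hn i j)
      rw [hDpc, if_pos (by omega : (1 : ℤ) ≤ n)]
      exact ih1 n hn i j

lemma eps_neg (U : Matrix (Fin r) (Fin r) S.Γ)
    (hU1 : ∀ i j n, S.abv (S.coeff ((U - 1) i j) n) ≤ theta S)
    {ε : ℝ} {b : ℤ} (hε : 0 < ε) (hb : 0 ≤ b)
    (hyp : ∀ n : ℤ, n < -b → ∀ i j, S.abv (S.coeff (U i j) n) < ε) (k : ℕ) :
    (∀ n : ℤ, n < -b → ∀ i j,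
      S.abv (S.coeff ((U - (seqPN S U k).1 * (seqPN S U k).2) i j) n) < ε) ∧
    (∀ n : ℤ, n < -b → ∀ i j,
      S.abv (S.coeff ((seqPN S U k).2 i j) n) < ε) := by
  induction k with
  | zero =>
    rw [seqPN_zero]
    constructor
    · intro n hn i j
      rw [one_mul, Matrix.sub_apply, coeff_sub, coeff_one_mat,
        if_neg (by push_neg; intro _; omega), sub_zero]
      exact hyp n hn i j
    · intro n hn i j
      rw [coeff_one_mat, if_neg (by push_neg; intro _; omega), abv_zero]
      exact hε
  | succ k ih =>
    obtain ⟨ih1, ih2⟩ := ih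
    obtain ⟨inv1, inv2, inv3, inv4, inv5⟩ := invariant S U hU1 k
    set P := (seqPN S U k).1 with hP
    set N := (seqPN S U k).2 with hN
    set D := U - P * N with hD
    set Dp := posM S D with hDp
    have hs : seqPN S U (k + 1) = (P + Dp, N + (D - Dp)) := by
      rw [seqPN_succ]; rfl
    have hDpc : ∀ (i j : Fin r) (n : ℤ),
        S.coeff (Dp i j) n = if 1 ≤ n then S.coeff (D i j) n else 0 :=
      fun i j n => coeff_posM S D i j n
    have hDmc : ∀ (i j : Fin r) (n : ℤ),
        S.coeff ((D - Dp) i j) n = if 1 ≤ n then 0 else S.coeff (D i j) n :=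
      fun i j n => coeff_negM S D i j n
    rw [hs]
    dsimp only
    constructor
    · intro n hn i j
      have herr := step_error S U P N Dp
      rw [← hD] at herr
      rw [herr, Matrix.neg_apply, coeff_neg, abv_neg, Matrix.add_apply,
        Matrix.add_apply, S.coeff_add, S.coeff_add]
      have hb1 : S.abv (S.coeff (((P - 1) * (D - Dp)) i j) n) < ε := by
        apply coeff_matmul_lt S hε
        intro l k'
        rcases le_or_gt k' 0 with hk | hk
        · rw [inv1 i l k' hk, abv_zero, zero_mul]; exact hε
        · have h1 : S.abv (S.coeff ((D - Dp) l j) (n - k')) < ε := by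
            rw [hDmc, if_neg (by omega : ¬(1 : ℤ) ≤ n - k')]
            exact ih1 (n - k') (by omega) l j
          calc S.abv (S.coeff ((P - 1) i l) k') * S.abv (S.coeff ((D - Dp) l j) (n - k'))
              ≤ 1 * S.abv (S.coeff ((D - Dp) l j) (n - k')) :=
            mul_le_mul_of_nonneg_right (S.abv_le_one _) (S.abv_nonneg _)
          _ = S.abv (S.coeff ((D - Dp) l j) (n - k')) := one_mul _
          _ < ε := h1
      have hb2 : S.abv (S.coeff ((Dp * (N - 1)) i j) n) < ε := by
        apply coeff_matmul_lt S hε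
        intro l k'
        rcases le_or_gt k' 0 with hk | hk
        · rw [hDpc, if_neg (by omega : ¬(1 : ℤ) ≤ k'), abv_zero, zero_mul]; exact hε
        · have h1 : S.abv (S.coeff ((N - 1) l j) (n - k')) < ε := by
            rw [Matrix.sub_apply, coeff_sub, coeff_one_mat,
              if_neg (by push_neg; intro _; omega), sub_zero]
            exact ih2 (n - k') (by omega) l j
          calc S.abv (S.coeff (Dp i l) k') * S.abv (S.coeff ((N - 1) l j) (n - k'))
              ≤ 1 * S.abv (S.coeff ((N - 1) l j) (n - k')) :=
            mul_le_mul_of_nonneg_right (S.abv_le_one _) (S.abv_nonneg _)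
          _ = S.abv (S.coeff ((N - 1) l j) (n - k')) := one_mul _
          _ < ε := h1
      have hb3 : S.abv (S.coeff ((Dp * (D - Dp)) i j) n) < ε := by
        apply coeff_matmul_lt S hε
        intro l k'
        rcases le_or_gt k' 0 with hk | hk
        · rw [hDpc, if_neg (by omega : ¬(1 : ℤ) ≤ k'), abv_zero, zero_mul]; exact hε
        · have h1 : S.abv (S.coeff ((D - Dp) l j) (n - k')) < ε := by
            rw [hDmc, if_neg (by omega : ¬(1 : ℤ) ≤ n - k')]
            exact ih1 (n - k') (by omega) l j
          calc S.abv (S.coeff (Dp i l) k') * S.abv (S.coeff ((D - Dp) l j) (n - k'))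
              ≤ 1 * S.abv (S.coeff ((D - Dp) l j) (n - k')) :=
            mul_le_mul_of_nonneg_right (S.abv_le_one _) (S.abv_nonneg _)
          _ = S.abv (S.coeff ((D - Dp) l j) (n - k')) := one_mul _
          _ < ε := h1
      exact abv_add_lt_of S (abv_add_lt_of S hb1 hb2) hb3
    · intro n hn i j
      rw [Matrix.add_apply, S.coeff_add]
      apply abv_add_lt_of S (ih2 n hn i j)
      rw [hDmc, if_neg (by omega : ¬(1 : ℤ) ≤ n)]
      exact ih1 n hn i j

end EpsBounds

end MPM
/-- Factorization of matrices over `Γ`.  Let `U = ∑ₙ Uₙ tⁿ` be a square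
matrix over `Γ` such that `U ≡ 1 (mod π)`.  Then there exists a unique pair `(P, N)` of
matrices over `Γ` of the form `P = 1 + ∑_{n≥1} Aₙ tⁿ` and `N = C + ∑_{n≥1} Bₙ t⁻ⁿ`, with
`C` a matrix over `O`, such that `U = P · N`.  Moreover, for `ε > 0`: if `|Uₙ| < ε` for all
`n > a` then `|Aₙ| < ε` for all `n > a`; and if `|Uₙ| < ε` for all `n < -b` then
`|Bₙ| < ε` for all `n < -b`. -/
theorem matrix_plus_minus_factorization {p : ℕ} [Fact p.Prime] (S : GammaSetting p)
    (π : S.O) (hπ : Irreducible π) {r : ℕ}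
    (U : Matrix (Fin r) (Fin r) S.Γ)
    (hU : ∀ i j n, π ∣ S.coeff ((U - 1) i j) n) :
    ∃ P N : Matrix (Fin r) (Fin r) S.Γ,
      -- `P = 1 + ∑_{n ≥ 1} Aₙ tⁿ`
      (∀ i j, ∀ n : ℤ, n ≤ 0 → S.coeff ((P - 1) i j) n = 0) ∧
      -- `N = C + ∑_{n ≥ 1} Bₙ t⁻ⁿ`
      (∀ i j, ∀ n : ℤ, 0 < n → S.coeff (N i j) n = 0) ∧
      U = P * N ∧
      -- uniqueness of the pair `(P, N)`
      (∀ P' N' : Matrix (Fin r) (Fin r) S.Γ,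
        (∀ i j, ∀ n : ℤ, n ≤ 0 → S.coeff ((P' - 1) i j) n = 0) →
        (∀ i j, ∀ n : ℤ, 0 < n → S.coeff (N' i j) n = 0) →
        U = P' * N' → P' = P ∧ N' = N) ∧
      -- bound on the positive coefficients `Aₙ` of `P`
      (∀ ε : ℝ, 0 < ε → ∀ a : ℤ,
        (∀ n : ℤ, a < n → ∀ i j, S.abv (S.coeff (U i j) n) < ε) →
        ∀ n : ℤ, a < n → 1 ≤ n → ∀ i j, S.abv (S.coeff (P i j) n) < ε) ∧
      -- bound on the negative coefficients `Bₙ` of `N`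
      (∀ ε : ℝ, 0 < ε → ∀ b : ℤ,
        (∀ n : ℤ, n < -b → ∀ i j, S.abv (S.coeff (U i j) n) < ε) →
        ∀ n : ℤ, n < -b → n ≤ -1 → ∀ i j, S.abv (S.coeff (N i j) n) < ε) := by
  classical
  have hU1 : ∀ i j n, S.abv (S.coeff ((U - 1) i j) n) ≤ MPM.theta S :=
    fun i j n => MPM.abv_dvd_le_theta S hπ (hU i j n)
  have hU1' : ∀ i j n, S.abv (S.coeff ((U - 1) i j) n) < 1 :=
    fun i j n => lt_of_le_of_lt (hU1 i j n) (MPM.theta_lt_one S)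
  set FP : ℕ → Matrix (Fin r) (Fin r) S.Γ := fun k => (MPM.seqPN S U k).1 with hFP
  set FN : ℕ → Matrix (Fin r) (Fin r) S.Γ := fun k => (MPM.seqPN S U k).2 with hFN
  have hDb : ∀ k (i j : Fin r) (n : ℤ),
      S.abv (S.coeff ((U - FP k * FN k) i j) n) ≤ MPM.theta S ^ (k + 1) :=
    fun k => (MPM.invariant S U hU1 k).2.2.2.2
  have hsP : ∀ k, FP (k + 1) = FP k + MPM.posM S (U - FP k * FN k) := by
    intro k
    show (MPM.seqPN S U (k + 1)).1 = _
    rw [MPM.seqPN_succ]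
    rfl
  have hsN : ∀ k, FN (k + 1) =
      FN k + ((U - FP k * FN k) - MPM.posM S (U - FP k * FN k)) := by
    intro k
    show (MPM.seqPN S U (k + 1)).2 = _
    rw [MPM.seqPN_succ]
    rfl
  have hstepP : ∀ k i j n,
      S.abv (S.coeff (FP (k + 1) i j - FP k i j) n) ≤ MPM.theta S ^ (k + 1) := by
    intro k i j n
    rw [hsP k]
    have e : (FP k + MPM.posM S (U - FP k * FN k)) i j - FP k i j =
        MPM.posM S (U - FP k * FN k) i j := by
      rw [Matrix.add_apply]; ring
    rw [e, MPM.coeff_posM]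
    by_cases h1 : 1 ≤ n
    · rw [if_pos h1]; exact hDb k i j n
    · rw [if_neg h1, MPM.abv_zero]; exact pow_nonneg (MPM.theta_pos S).le _
  have hstepN : ∀ k i j n,
      S.abv (S.coeff (FN (k + 1) i j - FN k i j) n) ≤ MPM.theta S ^ (k + 1) := by
    intro k i j n
    rw [hsN k]
    have e : (FN k + ((U - FP k * FN k) - MPM.posM S (U - FP k * FN k))) i j
        - FN k i j = ((U - FP k * FN k) - MPM.posM S (U - FP k * FN k)) i j := by
      rw [Matrix.add_apply]; ring
    rw [e, MPM.coeff_negM]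
    by_cases h1 : 1 ≤ n
    · rw [if_pos h1, MPM.abv_zero]; exact pow_nonneg (MPM.theta_pos S).le _
    · rw [if_neg h1]; exact hDb k i j n
  obtain ⟨P, hP⟩ := MPM.exists_limM S FP hstepP
  obtain ⟨N, hN⟩ := MPM.exists_limM S FN hstepN
  -- bounds on P - FP k and N - FN k as matrices
  have hPk : ∀ k i j n, S.abv (S.coeff ((FP k - P) i j) n) ≤ MPM.theta S ^ (k + 1) := by
    intro k i j n
    rw [Matrix.sub_apply, MPM.coeff_sub, ← MPM.abv_neg, neg_sub]
    exact hP k i j n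
  have hNk : ∀ k i j n, S.abv (S.coeff ((FN k - N) i j) n) ≤ MPM.theta S ^ (k + 1) := by
    intro k i j n
    rw [Matrix.sub_apply, MPM.coeff_sub, ← MPM.abv_neg, neg_sub]
    exact hN k i j n
  -- shape of P
  have shapeP : ∀ i j, ∀ n : ℤ, n ≤ 0 → S.coeff ((P - 1) i j) n = 0 := by
    intro i j n hn
    apply MPM.eq_zero_of_abv_le_theta_pow S
    intro k
    have h1 := (MPM.invariant S U hU1 k).1 i j n hn
    rw [Matrix.sub_apply, MPM.coeff_sub, sub_eq_zero] at h1
    rw [Matrix.sub_apply, MPM.coeff_sub, ← h1]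
    exact hP k i j n
  have shapeN : ∀ i j, ∀ n : ℤ, 0 < n → S.coeff (N i j) n = 0 := by
    intro i j n hn
    apply MPM.eq_zero_of_abv_le_theta_pow S
    intro k
    have h1 := (MPM.invariant S U hU1 k).2.1 i j n hn
    calc S.abv (S.coeff (N i j) n)
        = S.abv (S.coeff (N i j) n - S.coeff (FN k i j) n) := by rw [h1, sub_zero]
    _ ≤ MPM.theta S ^ (k + 1) := hN k i j n
  -- the factorization
  have hUPN : U = P * N := by
    rw [← sub_eq_zero]
    ext i j
    rw [Matrix.zero_apply]
    apply MPM.eq_zero_of_coeff S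
    intro n
    apply MPM.eq_zero_of_abv_le_theta_pow S
    intro k
    have hid : U - P * N = (U - FP k * FN k) + ((FP k - P) * FN k + P * (FN k - N)) := by
      noncomm_ring
    rw [hid, Matrix.add_apply, Matrix.add_apply, S.coeff_add, S.coeff_add]
    apply MPM.abv_add_le_of S
    · exact hDb k i j n
    · apply MPM.abv_add_le_of S
      · have h3 := MPM.coeff_matmul_le_of_bounds S (X := FP k - P) (Y := FN k)
          (pow_nonneg (MPM.theta_pos S).le (k + 1)) zero_le_one
          (hPk k) (fun i j n => S.abv_le_one (S.coeff (FN k i j) n)) i j n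
        rwa [mul_one] at h3
      · have h3 := MPM.coeff_matmul_le_of_bounds S (X := P) (Y := FN k - N)
          zero_le_one (pow_nonneg (MPM.theta_pos S).le (k + 1))
          (fun i j n => S.abv_le_one (S.coeff (P i j) n)) (hNk k) i j n
        rwa [one_mul] at h3
  refine ⟨P, N, shapeP, shapeN, hUPN, ?_, ?_, ?_⟩
  · -- uniqueness
    intro P' N' hP' hN' hUPN'
    exact MPM.uniqueness S U P N P' N' hU1' shapeP shapeN hP' hN' hUPN hUPN'
  · -- positive coefficient bounds
    intro ε hε a hyp n hn h1n i j
    by_cases hεle : ε ≤ 1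
    swap
    · exact lt_of_le_of_lt (S.abv_le_one _) (lt_of_not_ge hεle)
    by_cases ha : 0 ≤ a
    swap
    · -- a < 0 : contradiction with U ≡ 1 (mod π)
      exfalso
      have h00 := hyp 0 (by omega) i i
      have hd := hU1' i i 0
      rw [Matrix.sub_apply, MPM.coeff_sub, MPM.coeff_one_mat,
        if_pos ⟨rfl, rfl⟩] at hd
      have e : (1 : S.O) = S.coeff (U i i) 0 - (S.coeff (U i i) 0 - 1) := by ring
      have habs : S.abv (1 : S.O) < 1 := by
        rw [e]
        exact MPM.abv_sub_lt_of S (lt_of_lt_of_le h00 hεle) hd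
      rw [MPM.abv_one] at habs
      exact lt_irrefl 1 habs
    have key := MPM.eps_pos S U hU1 hε ha hyp
    obtain ⟨k, hk⟩ := MPM.exists_theta_pow_lt S hε
    have h1 : S.abv (S.coeff (P i j) n - S.coeff (FP k i j) n) < ε :=
      lt_of_le_of_lt (hP k i j n) hk
    have h2 : S.abv (S.coeff (FP k i j) n) < ε := by
      have e : S.coeff (FP k i j) n = S.coeff ((FP k - 1) i j) n := by
        rw [Matrix.sub_apply, MPM.coeff_sub, MPM.coeff_one_mat,
          if_neg (by push_neg; intro _; omega), sub_zero]
      rw [e]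
      exact (key k).2 n hn i j
    have e2 : S.coeff (P i j) n =
        (S.coeff (P i j) n - S.coeff (FP k i j) n) + S.coeff (FP k i j) n := by ring
    rw [e2]
    exact MPM.abv_add_lt_of S h1 h2
  · -- negative coefficient bounds
    intro ε hε b hyp n hn h1n i j
    by_cases hεle : ε ≤ 1
    swap
    · exact lt_of_le_of_lt (S.abv_le_one _) (lt_of_not_ge hεle)
    by_cases hb : 0 ≤ b
    swap
    · exfalso
      have h00 := hyp 0 (by omega) i i
      have hd := hU1' i i 0
      rw [Matrix.sub_apply, MPM.coeff_sub, MPM.coeff_one_mat,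
        if_pos ⟨rfl, rfl⟩] at hd
      have e : (1 : S.O) = S.coeff (U i i) 0 - (S.coeff (U i i) 0 - 1) := by ring
      have habs : S.abv (1 : S.O) < 1 := by
        rw [e]
        exact MPM.abv_sub_lt_of S (lt_of_lt_of_le h00 hεle) hd
      rw [MPM.abv_one] at habs
      exact lt_irrefl 1 habs
    have key := MPM.eps_neg S U hU1 hε hb hyp
    obtain ⟨k, hk⟩ := MPM.exists_theta_pow_lt S hε
    have h1 : S.abv (S.coeff (N i j) n - S.coeff (FN k i j) n) < ε :=
      lt_of_le_of_lt (hN k i j n) hk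
    have h2 : S.abv (S.coeff (FN k i j) n) < ε := (key k).2 n hn i j
    have e2 : S.coeff (N i j) n =
        (S.coeff (N i j) n - S.coeff (FN k i j) n) + S.coeff (FN k i j) n := by ring
    rw [e2]
    exact MPM.abv_add_lt_of S h1 h2
end

section
/- Let x = Σ_{i∈ℤ} c_i t^i be a nonzero element of Γ_an,con. Then x is a unit in Γ_an,con if and only if the set {|c_i| : i ∈ ℤ} is bounded above. -/
open scoped Classical

/-- The analytic setting.  `F = O[1/p]` is the fraction field of a complete discrete
valuation ring `O` which is a finite totally ramified extension of the Witt vectors of an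
algebraically closed field `k` of characteristic `p` (encoded via the absolute value `abv`
with `abv p = 1/p`, discreteness, completeness, and algebraically closed residue field),
equipped with a Frobenius lift `σF`.  `Γac = Γ_{an,con}` is the ring of series
`∑_{n ∈ ℤ} cₙ tⁿ` with `cₙ ∈ F` such that `limsup_{n→+∞} |cₙ|^{1/n} ≤ 1` and
`|cₙ| ≤ p^{cn+d}` for all `n < 0`, for some constants `c, d > 0`; it is encoded by its
coefficient functionals `coeff`, and carries the standard Frobenius `frob = σ_t`
(acting by `σ` on coefficients and sending `t` to `t^p`). -/
structure AnSetting (p : ℕ) [Fact p.Prime] where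
  F : Type
  [fieldF : Field F]
  abv : F → ℝ
  abv_nonneg : ∀ x, 0 ≤ abv x
  abv_eq_zero : ∀ x, abv x = 0 ↔ x = 0
  abv_mul : ∀ x y, abv (x * y) = abv x * abv y
  abv_add_le : ∀ x y, abv (x + y) ≤ max (abv x) (abv y)
  abv_p : abv (p : F) = (p : ℝ)⁻¹
  m : ℕ
  m_pos : 0 < m
  abv_discrete : ∀ x : F, x ≠ 0 → ∃ n : ℤ, abv x = (p : ℝ) ^ ((n : ℝ) / (m : ℝ))
  complete : ∀ f : ℕ → F,
    (∀ ε : ℝ, 0 < ε → ∃ N, ∀ a ≥ N, ∀ b ≥ N, abv (f a - f b) < ε) →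
    ∃ x : F, ∀ ε : ℝ, 0 < ε → ∃ N, ∀ a ≥ N, abv (f a - x) < ε
  residue_algClosed : ∀ f : Polynomial F, f.Monic → (∀ i, abv (f.coeff i) ≤ 1) →
    0 < f.natDegree → ∃ x : F, abv x ≤ 1 ∧ abv (Polynomial.eval x f) < 1
  σF : F ≃+* F
  abv_σF : ∀ x, abv (σF x) = abv x
  σF_frob : ∀ x : F, abv x ≤ 1 → abv (σF x - x ^ p) < 1
  Γac : Type
  [commΓac : CommRing Γac]
  coeff : Γac → ℤ → F
  coeff_injective : Function.Injective coeff
  coeff_add : ∀ x y i, coeff (x + y) i = coeff x i + coeff y i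
  coeff_growth : ∀ (x : Γac) (ε : ℝ), 0 < ε → ∃ N : ℤ, 0 ≤ N ∧
    ∀ n : ℤ, N ≤ n → abv (coeff x n) ≤ (1 + ε) ^ n
  coeff_decay : ∀ x : Γac, ∃ c d : ℝ, 0 < c ∧ 0 < d ∧
    ∀ n : ℤ, n < 0 → abv (coeff x n) ≤ (p : ℝ) ^ (c * (n : ℝ) + d)
  coeff_surjective : ∀ f : ℤ → F,
    (∀ ε : ℝ, 0 < ε → ∃ N : ℤ, 0 ≤ N ∧ ∀ n : ℤ, N ≤ n → abv (f n) ≤ (1 + ε) ^ n) →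
    (∃ c d : ℝ, 0 < c ∧ 0 < d ∧ ∀ n : ℤ, n < 0 → abv (f n) ≤ (p : ℝ) ^ (c * (n : ℝ) + d)) →
    ∃ x, coeff x = f
  coeff_one : ∀ i, coeff 1 i = if i = 0 then 1 else 0
  t : Γac
  coeff_t : ∀ i, coeff t i = if i = 1 then 1 else 0
  const : F →+* Γac
  coeff_const : ∀ a i, coeff (const a) i = if i = 0 then a else 0
  coeff_mul : ∀ (x y : Γac) (n : ℤ) (ε : ℝ), 0 < ε →
    ∃ S : Finset ℤ, ∀ T : Finset ℤ, S ⊆ T →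
      abv (coeff (x * y) n - ∑ i ∈ T, coeff x i * coeff y (n - i)) < ε
  frob : Γac →+* Γac
  coeff_frob : ∀ x n, coeff (frob x) n =
    if (p : ℤ) ∣ n then σF (coeff x (n / (p : ℤ))) else 0

attribute [instance] AnSetting.fieldF AnSetting.commΓac

namespace AnSetting

variable {p : ℕ} [Fact p.Prime] (S : AnSetting p)

/-- The subring `Ω_an ⊆ Γ_{an,con}` of rigid analytic functions on the open unit disc
(series with no negative-index coefficients), as a set. -/
def omegaAnSet : Set S.Γac := {x | ∀ i : ℤ, i < 0 → S.coeff x i = 0}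

/-- The subring `Γ_con[1/p] ⊆ Γ_{an,con}`: the elements whose coefficients are bounded
above, as a set. -/
def conPSet : Set S.Γac := {x | ∃ C : ℝ, ∀ i : ℤ, S.abv (S.coeff x i) ≤ C}

/-- The subring `Γ_con ⊆ Γ_{an,con}`: the elements with integral coefficients, as a set. -/
def conSet : Set S.Γac := {x | ∀ i : ℤ, S.abv (S.coeff x i) ≤ 1}

/-- The subring `Ω = O[[t]] ⊆ Γ_{an,con}`, as a set. -/
def omegaSet : Set S.Γac := {x | (∀ i : ℤ, S.abv (S.coeff x i) ≤ 1) ∧ ∀ i : ℤ, i < 0 → S.coeff x i = 0}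

end AnSetting

namespace AnSetting

section Aux

variable {p : ℕ} [Fact p.Prime] (S : AnSetting p)

lemma pR_pos (_S : AnSetting p) : (0:ℝ) < (p:ℝ) := by
  exact_mod_cast (Fact.out : p.Prime).pos

lemma one_lt_pR (_S : AnSetting p) : (1:ℝ) < (p:ℝ) := by
  exact_mod_cast (Fact.out : p.Prime).one_lt

lemma abv_zero : S.abv 0 = 0 := (S.abv_eq_zero 0).2 rfl

lemma abv_one : S.abv 1 = 1 := by
  have h := S.abv_mul 1 1
  rw [mul_one] at h
  have h1 : S.abv 1 ≠ 0 := fun h0 => one_ne_zero ((S.abv_eq_zero 1).1 h0)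
  have h2 : S.abv 1 * 1 = S.abv 1 * S.abv 1 := by rw [mul_one]; exact h
  exact (mul_left_cancel₀ h1 h2).symm

lemma abv_pos {x : S.F} (hx : x ≠ 0) : 0 < S.abv x :=
  lt_of_le_of_ne (S.abv_nonneg x) (fun h => hx ((S.abv_eq_zero x).1 h.symm))

lemma abv_neg (x : S.F) : S.abv (-x) = S.abv x := by
  have hm : S.abv (-1) = 1 := by
    have h := S.abv_mul (-1) (-1)
    rw [neg_mul_neg, one_mul, S.abv_one] at h
    nlinarith [S.abv_nonneg (-1 : S.F)]
  have := S.abv_mul (-1) x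
  rw [neg_one_mul, hm, one_mul] at this
  exact this

lemma abv_sub_comm (a b : S.F) : S.abv (a - b) = S.abv (b - a) := by
  rw [← S.abv_neg (a - b), neg_sub]

lemma abv_inv {x : S.F} (hx : x ≠ 0) : S.abv x⁻¹ = (S.abv x)⁻¹ := by
  have h := S.abv_mul x x⁻¹
  rw [mul_inv_cancel₀ hx, S.abv_one] at h
  exact (inv_eq_of_mul_eq_one_right h.symm).symm

lemma eq_of_forall_abv_sub_lt {a b : S.F} (h : ∀ ε : ℝ, 0 < ε → S.abv (a - b) < ε) :
    a = b := by
  have : S.abv (a - b) = 0 := by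
    by_contra h0
    have hp := lt_of_le_of_ne (S.abv_nonneg _) (Ne.symm h0)
    exact absurd (h _ hp) (lt_irrefl _)
  exact sub_eq_zero.1 ((S.abv_eq_zero _).1 this)

lemma abv_le_of_forall_lt {a : S.F} {M : ℝ}
    (h : ∀ ε : ℝ, 0 < ε → ∃ s : S.F, S.abv (a - s) < ε ∧ S.abv s ≤ M) :
    S.abv a ≤ M := by
  by_contra hM
  push_neg at hM
  obtain ⟨s, hs1, hs2⟩ := h ((S.abv a - M)/2) (by linarith)
  have : S.abv a ≤ max (S.abv (a - s)) (S.abv s) := by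
    have := S.abv_add_le (a - s) s
    rwa [sub_add_cancel] at this
  rcases le_max_iff.1 this with h1 | h1 <;> linarith [S.abv_nonneg s]

lemma abv_sum_le {ι : Type*} (T : Finset ι) (f : ι → S.F) {M : ℝ} (hM : 0 ≤ M)
    (h : ∀ i ∈ T, S.abv (f i) ≤ M) : S.abv (∑ i ∈ T, f i) ≤ M := by
  classical
  induction T using Finset.induction with
  | empty => simpa [S.abv_zero] using hM
  | @insert a T' hnot ih =>
    rw [Finset.sum_insert hnot]
    refine le_trans (S.abv_add_le _ _) (max_le (h a (Finset.mem_insert_self a T')) ?_)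
    exact ih (fun i hi => h i (Finset.mem_insert_of_mem hi))

lemma abv_sum_lt {ι : Type*} (T : Finset ι) (f : ι → S.F) {M : ℝ} (hM : 0 < M)
    (h : ∀ i ∈ T, S.abv (f i) < M) : S.abv (∑ i ∈ T, f i) < M := by
  classical
  induction T using Finset.induction with
  | empty => simpa [S.abv_zero] using hM
  | @insert a T' hnot ih =>
    rw [Finset.sum_insert hnot]
    refine lt_of_le_of_lt (S.abv_add_le _ _) (max_lt (h a (Finset.mem_insert_self a T')) ?_)
    exact ih (fun i hi => h i (Finset.mem_insert_of_mem hi))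

lemma abv_add_eq {a b : S.F} (h : S.abv b < S.abv a) : S.abv (a + b) = S.abv a := by
  refine le_antisymm (le_trans (S.abv_add_le a b) (max_le le_rfl (le_of_lt h))) ?_
  have h2 : S.abv a ≤ max (S.abv (a + b)) (S.abv b) := by
    have := S.abv_add_le (a + b) (-b)
    rwa [add_neg_cancel_right, S.abv_neg] at this
  rcases le_max_iff.1 h2 with h1 | h1
  · exact h1
  · linarith

/-- Discreteness: an element of absolute value `< 1` has absolute value `≤ q := p^(-1/m)`. -/
lemma abv_le_q_of_lt_one {a : S.F} (h : S.abv a < 1) :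
    S.abv a ≤ (p:ℝ) ^ (-(1:ℝ)/(S.m:ℝ)) := by
  rcases eq_or_ne a 0 with rfl | ha
  · rw [S.abv_zero]; positivity
  obtain ⟨n, hn⟩ := S.abv_discrete a ha
  rw [hn] at h ⊢
  have hm : (0:ℝ) < (S.m:ℝ) := by exact_mod_cast S.m_pos
  have hexp : (n:ℝ)/(S.m:ℝ) < 0 := by
    by_contra hc
    push_neg at hc
    exact absurd (Real.one_le_rpow (le_of_lt (S.one_lt_pR)) hc) (not_le.2 h)
  have hn1 : (n:ℝ) < 0 := by
    by_contra hc; push_neg at hc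
    exact absurd (div_nonneg hc (le_of_lt hm)) (not_le.2 hexp)
  have hn2 : (n:ℝ) ≤ -1 := by
    have : n < 0 := by exact_mod_cast hn1
    have : n ≤ -1 := by omega
    exact_mod_cast this
  apply Real.rpow_le_rpow_of_exponent_le (le_of_lt (S.one_lt_pR))
  rw [div_le_div_iff₀ hm hm]
  nlinarith


/-- Coefficient functional as an additive hom. -/
def coeffHom (j : ℤ) : S.Γac →+ S.F :=
  AddMonoidHom.mk' (fun x => S.coeff x j) (fun a b => S.coeff_add a b j)

lemma coeff_zero (j : ℤ) : S.coeff 0 j = 0 := by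
  have := S.coeff_add 0 0 j
  rw [add_zero] at this
  exact (add_eq_right.1 this.symm)

lemma coeff_neg (x : S.Γac) (j : ℤ) : S.coeff (-x) j = -S.coeff x j :=
  map_neg (S.coeffHom j) x

lemma coeff_sub (x y : S.Γac) (j : ℤ) : S.coeff (x - y) j = S.coeff x j - S.coeff y j :=
  map_sub (S.coeffHom j) x y

lemma coeff_finsetSum {ι : Type*} (T : Finset ι) (f : ι → S.Γac) (j : ℤ) :
    S.coeff (∑ i ∈ T, f i) j = ∑ i ∈ T, S.coeff (f i) j :=
  map_sum (S.coeffHom j) f T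

lemma one_ne_zero' : (1 : S.Γac) ≠ 0 := by
  intro h
  have h1 := S.coeff_one 0
  rw [h, S.coeff_zero] at h1
  simp at h1

lemma exists_coeff_ne_zero {x : S.Γac} (hx : x ≠ 0) : ∃ i, S.coeff x i ≠ 0 := by
  by_contra h
  push_neg at h
  exact hx (S.coeff_injective (funext fun i => by rw [h i, S.coeff_zero]))

/-- If all the convolution terms vanish outside a finite set `G`, the product coefficient
is the finite sum over `G`. -/
lemma mul_coeff_eq_of_support (x y : S.Γac) (n : ℤ) (G : Finset ℤ)
    (h : ∀ i ∉ G, S.coeff x i * S.coeff y (n - i) = 0) :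
    S.coeff (x * y) n = ∑ i ∈ G, S.coeff x i * S.coeff y (n - i) := by
  apply S.eq_of_forall_abv_sub_lt
  intro ε hε
  obtain ⟨T0, hT0⟩ := S.coeff_mul x y n ε hε
  have := hT0 (T0 ∪ G) Finset.subset_union_left
  have hsum : ∑ i ∈ T0 ∪ G, S.coeff x i * S.coeff y (n - i)
      = ∑ i ∈ G, S.coeff x i * S.coeff y (n - i) := by
    apply (Finset.sum_subset Finset.subset_union_right ?_).symm
    intro i _ hi
    exact h i hi
  rwa [hsum] at this

/-- Sup bound on the coefficients of a product. -/
lemma mul_coeff_le (x y : S.Γac) (n : ℤ) {M : ℝ} (hM : 0 ≤ M)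
    (h : ∀ i : ℤ, S.abv (S.coeff x i) * S.abv (S.coeff y (n - i)) ≤ M) :
    S.abv (S.coeff (x * y) n) ≤ M := by
  apply S.abv_le_of_forall_lt
  intro ε hε
  obtain ⟨T0, hT0⟩ := S.coeff_mul x y n ε hε
  refine ⟨∑ i ∈ T0, S.coeff x i * S.coeff y (n - i), hT0 T0 le_rfl, ?_⟩
  apply S.abv_sum_le _ _ hM
  intro i _
  rw [S.abv_mul]
  exact h i

lemma coeff_const_mul (a : S.F) (x : S.Γac) (n : ℤ) :
    S.coeff (S.const a * x) n = a * S.coeff x n := by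
  rw [S.mul_coeff_eq_of_support _ _ _ {0} ?side]
  · rw [Finset.sum_singleton, S.coeff_const, if_pos rfl, sub_zero]
  case side =>
    intro i hi
    rw [S.coeff_const, if_neg (by simpa using hi), zero_mul]

lemma isUnit_const {a : S.F} (ha : a ≠ 0) : IsUnit (S.const a) := by
  refine IsUnit.of_mul_eq_one (S.const a⁻¹) ?_
  rw [← map_mul, mul_inv_cancel₀ ha, map_one]

lemma coeff_t_pow (k : ℕ) (j : ℤ) :
    S.coeff (S.t ^ k) j = if j = (k:ℤ) then 1 else 0 := by
  induction k generalizing j with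
  | zero => simpa using S.coeff_one j
  | succ k ih =>
    rw [pow_succ, mul_comm, S.mul_coeff_eq_of_support _ _ _ {1} ?side]
    · rw [Finset.sum_singleton, S.coeff_t, if_pos rfl, one_mul, ih]
      by_cases h : j = ((k:ℤ) + 1)
      · rw [if_pos (by omega), if_pos (by push_cast; omega)]
      · rw [if_neg (by omega), if_neg (by push_cast; omega)]
    case side =>
      intro i hi
      rw [S.coeff_t, if_neg (by simpa using hi), zero_mul]

/-- The inverse of `t`. -/
lemma exists_tinv : ∃ u : S.Γac, S.t * u = 1 ∧ ∀ j, S.coeff u j = if j = -1 then 1 else 0 := by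
  have hgrow : ∀ ε : ℝ, 0 < ε → ∃ N : ℤ, 0 ≤ N ∧ ∀ n : ℤ, N ≤ n →
      S.abv ((fun j : ℤ => if j = -1 then (1:S.F) else 0) n) ≤ (1 + ε) ^ n := by
    intro ε hε
    refine ⟨0, le_rfl, fun n hn => ?_⟩
    simp only []
    rw [if_neg (by omega), S.abv_zero]
    positivity
  have hdecay : ∃ c d : ℝ, 0 < c ∧ 0 < d ∧ ∀ n : ℤ, n < 0 →
      S.abv ((fun j : ℤ => if j = -1 then (1:S.F) else 0) n) ≤ (p : ℝ) ^ (c * (n : ℝ) + d) := by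
    refine ⟨1, 1, one_pos, one_pos, fun n hn => ?_⟩
    simp only []
    by_cases h : n = -1
    · subst h
      rw [if_pos rfl, S.abv_one]
      norm_num
    · rw [if_neg h, S.abv_zero]
      positivity
  obtain ⟨u, hu⟩ := S.coeff_surjective _ hgrow hdecay
  refine ⟨u, ?_, fun j => by simp only [hu]⟩
  apply S.coeff_injective
  funext n
  rw [S.mul_coeff_eq_of_support _ _ _ {1} ?side, Finset.sum_singleton, S.coeff_t,
    if_pos rfl, one_mul, S.coeff_one]
  · simp only [hu]
    by_cases h : n = 0
    · rw [if_pos (by omega), if_pos h]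
    · rw [if_neg (by omega), if_neg h]
  case side =>
    intro i hi
    rw [S.coeff_t, if_neg (by simpa using hi), zero_mul]

lemma coeff_tinv_pow {u : S.Γac} (hu : ∀ j, S.coeff u j = if j = -1 then 1 else 0)
    (k : ℕ) (j : ℤ) : S.coeff (u ^ k) j = if j = -(k:ℤ) then 1 else 0 := by
  induction k generalizing j with
  | zero => simpa using S.coeff_one j
  | succ k ih =>
    rw [pow_succ, mul_comm, S.mul_coeff_eq_of_support _ _ _ {-1} ?side]
    · rw [Finset.sum_singleton, hu, if_pos rfl, one_mul, ih]
      by_cases h : j = -((k:ℤ) + 1)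
      · rw [if_pos (by omega), if_pos (by push_cast; omega)]
      · rw [if_neg (by omega), if_neg (by push_cast; omega)]
    case side =>
      intro i hi
      rw [hu, if_neg (by simpa using hi), zero_mul]

/-- For any `a ≠ 0` and `k : ℤ` there is a unit whose coefficients are `a` at `k` and `0`
elsewhere. -/
lemma exists_shift_unit {a : S.F} (ha : a ≠ 0) (k : ℤ) :
    ∃ W : S.Γac, IsUnit W ∧ ∀ j, S.coeff W j = if j = k then a else 0 := by
  obtain ⟨u, hu1, hu2⟩ := S.exists_tinv
  have htu : IsUnit S.t := IsUnit.of_mul_eq_one _ hu1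
  have huu : IsUnit u := IsUnit.of_mul_eq_one _ (by rwa [mul_comm] at hu1)
  rcases le_or_gt 0 k with hk | hk
  · refine ⟨S.const a * S.t ^ k.toNat, (S.isUnit_const ha).mul (htu.pow _), fun j => ?_⟩
    rw [S.coeff_const_mul, S.coeff_t_pow]
    by_cases h : j = k
    · rw [if_pos (by omega), if_pos h, mul_one]
    · rw [if_neg (by omega), if_neg h, mul_zero]
  · refine ⟨S.const a * u ^ (-k).toNat, (S.isUnit_const ha).mul (huu.pow _), fun j => ?_⟩
    rw [S.coeff_const_mul, S.coeff_tinv_pow hu2]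
    by_cases h : j = k
    · rw [if_pos (by omega), if_pos h, mul_one]
    · rw [if_neg (by omega), if_neg h, mul_zero]


/-- For `z ≠ 0` and a suitable radius `r`, the Gauss weight `i ↦ |zᵢ| p^(-ri)` attains a
positive maximum, and there is a least maximizing index. -/
lemma exists_least_maximizer (z : S.Γac) (hz : z ≠ 0) {r c d : ℝ} (hr : 0 < r)
    (hd : 0 < d) (hrc : r < c)
    (hdec : ∀ n : ℤ, n < 0 → S.abv (S.coeff z n) ≤ (p:ℝ) ^ (c * (n:ℝ) + d)) :
    ∃ i0 : ℤ,
      0 < S.abv (S.coeff z i0) * ((p:ℝ) ^ (-r)) ^ i0 ∧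
      (∀ i : ℤ, S.abv (S.coeff z i) * ((p:ℝ) ^ (-r)) ^ i
        ≤ S.abv (S.coeff z i0) * ((p:ℝ) ^ (-r)) ^ i0) ∧
      (∀ i : ℤ, i < i0 → S.abv (S.coeff z i) * ((p:ℝ) ^ (-r)) ^ i
        < S.abv (S.coeff z i0) * ((p:ℝ) ^ (-r)) ^ i0) := by
  have hp0 : (0:ℝ) < (p:ℝ) := S.pR_pos
  have hp1 : (1:ℝ) < (p:ℝ) := S.one_lt_pR
  set ρ : ℝ := (p:ℝ) ^ (-r) with hρdef
  have hρpos : 0 < ρ := Real.rpow_pos_of_pos hp0 _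
  set φ : ℤ → ℝ := fun i => S.abv (S.coeff z i) * ρ ^ i with hφdef
  have hφnonneg : ∀ i, 0 ≤ φ i := fun i =>
    mul_nonneg (S.abv_nonneg _) (le_of_lt (zpow_pos hρpos i))
  -- the zpow of ρ is a genuine p-power
  have hρzpow : ∀ i : ℤ, ρ ^ i = (p:ℝ) ^ (-r * (i:ℝ)) := by
    intro i
    rw [hρdef, ← Real.rpow_intCast ((p:ℝ) ^ (-r)) i, ← Real.rpow_mul (le_of_lt hp0)]
  obtain ⟨i1, hi1⟩ := S.exists_coeff_ne_zero hz
  have hV : 0 < φ i1 := mul_pos (S.abv_pos hi1) (zpow_pos hρpos i1)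
  set V : ℝ := φ i1 with hVdef
  set L : ℝ := Real.logb (p:ℝ) V with hLdef
  have hVL : ((p:ℝ) : ℝ) ^ L = V := Real.rpow_logb hp0 (ne_of_gt hp1) hV
  -- growth side
  have hεpos : (0:ℝ) < (p:ℝ) ^ (r/2) - 1 := by
    have : (1:ℝ) < (p:ℝ) ^ (r/2) := by
      calc (1:ℝ) = (p:ℝ) ^ (0:ℝ) := (Real.rpow_zero _).symm
      _ < (p:ℝ) ^ (r/2) := Real.rpow_lt_rpow_of_exponent_lt hp1 (by linarith)
    linarith
  obtain ⟨N, hN0, hgr⟩ := S.coeff_growth z ((p:ℝ) ^ (r/2) - 1) hεpos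
  have hbig : ∀ n : ℤ, N ≤ n → φ n ≤ (p:ℝ) ^ (-(r/2) * (n:ℝ)) := by
    intro n hn
    have h1 : S.abv (S.coeff z n) ≤ (1 + ((p:ℝ) ^ (r/2) - 1)) ^ n := hgr n hn
    have h2 : (1 + ((p:ℝ) ^ (r/2) - 1)) = (p:ℝ) ^ (r/2) := by ring
    rw [h2] at h1
    have h3 : φ n ≤ ((p:ℝ) ^ (r/2)) ^ n * ρ ^ n :=
      mul_le_mul_of_nonneg_right h1 (le_of_lt (zpow_pos hρpos n))
    have h4 : ((p:ℝ) ^ (r/2)) ^ n = (p:ℝ) ^ ((r/2) * (n:ℝ)) := by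
      rw [← Real.rpow_intCast ((p:ℝ) ^ (r/2)) n, ← Real.rpow_mul (le_of_lt hp0)]
    rw [h4, hρzpow n, ← Real.rpow_add hp0] at h3
    calc φ n ≤ (p:ℝ) ^ (r/2 * (n:ℝ) + -r * (n:ℝ)) := h3
    _ = (p:ℝ) ^ (-(r/2) * (n:ℝ)) := by ring_nf
  -- decay side
  have hsmall : ∀ n : ℤ, n < 0 → φ n ≤ (p:ℝ) ^ ((c - r) * (n:ℝ) + d) := by
    intro n hn
    have h1 := hdec n hn
    have h3 : φ n ≤ (p:ℝ) ^ (c * (n:ℝ) + d) * ρ ^ n :=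
      mul_le_mul_of_nonneg_right h1 (le_of_lt (zpow_pos hρpos n))
    rw [hρzpow n, ← Real.rpow_add hp0] at h3
    calc φ n ≤ (p:ℝ) ^ (c * (n:ℝ) + d + -r * (n:ℝ)) := h3
    _ = (p:ℝ) ^ ((c - r) * (n:ℝ) + d) := by ring_nf
  -- upper cutoff
  set Aplus : ℤ := max N (⌈(-2*L)/r⌉ + 1) with hAp
  have hAbig : ∀ n : ℤ, Aplus ≤ n → φ n < V := by
    intro n hn
    have h1 : φ n ≤ (p:ℝ) ^ (-(r/2) * (n:ℝ)) := hbig n (le_trans (le_max_left _ _) hn)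
    have h2 : (-2*L)/r < (n:ℝ) := by
      have : (⌈(-2*L)/r⌉ : ℝ) + 1 ≤ (n:ℝ) := by
        exact_mod_cast le_trans (le_max_right N _) hn
      linarith [Int.le_ceil ((-2*L)/r)]
    have h3 : -2*L < (n:ℝ) * r := (div_lt_iff₀ hr).1 h2
    have h4 : -(r/2) * (n:ℝ) < L := by linarith
    calc φ n ≤ (p:ℝ) ^ (-(r/2) * (n:ℝ)) := h1
    _ < (p:ℝ) ^ L := Real.rpow_lt_rpow_of_exponent_lt hp1 h4
    _ = V := hVL
  -- lower cutoff
  set Aminus : ℤ := min (-1) (⌊(L - d)/(c - r)⌋ - 1) with hAm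
  have hcr : (0:ℝ) < c - r := by linarith
  have hAsmall : ∀ n : ℤ, n ≤ Aminus → φ n < V := by
    intro n hn
    have hneg : n < 0 := by
      have := le_trans hn (min_le_left _ _)
      omega
    have h1 := hsmall n hneg
    have h2 : (n:ℝ) < (L - d)/(c - r) := by
      have hn2 : (n:ℝ) ≤ (⌊(L - d)/(c - r)⌋ : ℝ) - 1 := by
        have := le_trans hn (min_le_right (-1) _)
        exact_mod_cast this
      linarith [Int.floor_le ((L - d)/(c - r))]
    have h3 : (n:ℝ) * (c - r) < L - d := (lt_div_iff₀ hcr).1 h2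
    have h4 : (c - r) * (n:ℝ) + d < L := by linarith
    calc φ n ≤ (p:ℝ) ^ ((c - r) * (n:ℝ) + d) := h1
    _ < (p:ℝ) ^ L := Real.rpow_lt_rpow_of_exponent_lt hp1 h4
    _ = V := hVL
  -- the candidate finite window
  set W : Finset ℤ := Finset.Icc (Aminus + 1) (Aplus - 1) with hW
  have hout : ∀ i : ℤ, i ∉ W → φ i < V := by
    intro i hi
    rw [hW, Finset.mem_Icc] at hi
    push_neg at hi
    rcases le_or_gt i Aminus with h | h
    · exact hAsmall i h
    · refine hAbig i ?_
      have := hi (by omega)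
      omega
  have hi1W : i1 ∈ W := by
    by_contra hcon
    exact absurd (hout i1 hcon) (lt_irrefl V)
  obtain ⟨b, hbW, hbmax⟩ := Finset.exists_max_image W φ ⟨i1, hi1W⟩
  have hglobal : ∀ i, φ i ≤ φ b := by
    intro i
    by_cases hiW : i ∈ W
    · exact hbmax i hiW
    · exact le_trans (le_of_lt (hout i hiW)) (le_trans (hbmax i1 hi1W) le_rfl)
  set B : Finset ℤ := W.filter (fun i => φ b ≤ φ i) with hB
  have hBne : B.Nonempty := ⟨b, Finset.mem_filter.2 ⟨hbW, le_rfl⟩⟩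
  set i0 : ℤ := B.min' hBne with hi0def
  have hi0B : i0 ∈ B := Finset.min'_mem B hBne
  have hi0max : φ i0 = φ b :=
    le_antisymm (hglobal i0) ((Finset.mem_filter.1 hi0B).2)
  refine ⟨i0, ?_, ?_, ?_⟩
  · show 0 < φ i0
    rw [hi0max]
    exact lt_of_lt_of_le hV (hbmax i1 hi1W)
  · intro i
    show φ i ≤ φ i0
    rw [hi0max]
    exact hglobal i
  · intro i hii0
    show φ i < φ i0
    rw [hi0max]
    rcases lt_or_ge (φ i) (φ b) with h | h
    · exact h
    · exfalso
      have hiW : i ∈ W := by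
        by_contra hcon
        have := hout i hcon
        have hVb : V ≤ φ b := hbmax i1 hi1W
        linarith
      have hiB : i ∈ B := Finset.mem_filter.2 ⟨hiW, h⟩
      have := Finset.min'_le B i hiB
      omega


/-- If `x` is a unit, its coefficients are bounded. -/
lemma bounded_of_isUnit {x : S.Γac} (hx : x ≠ 0) (hu : IsUnit x) :
    ∃ C : ℝ, ∀ i : ℤ, S.abv (S.coeff x i) ≤ C := by
  have hp0 : (0:ℝ) < (p:ℝ) := S.pR_pos
  have hp1 : (1:ℝ) < (p:ℝ) := S.one_lt_pR
  obtain ⟨y, hxy⟩ := hu.exists_right_inv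
  have hy : y ≠ 0 := by
    rintro rfl
    rw [mul_zero] at hxy
    exact S.one_ne_zero' hxy.symm
  obtain ⟨cx, dx, hcx, hdx, hdecx⟩ := S.coeff_decay x
  obtain ⟨cy, dy, hcy, hdy, hdecy⟩ := S.coeff_decay y
  set r0 : ℝ := min cx cy / 2 with hr0
  have hr0pos : 0 < r0 := half_pos (lt_min hcx hcy)
  have key : ∀ r : ℝ, 0 < r → r ≤ r0 → ∀ i j : ℤ,
      S.abv (S.coeff x i) * S.abv (S.coeff y j) ≤ (p:ℝ) ^ (r * ((i:ℝ) + (j:ℝ))) := by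
    intro r hr hrr0 i j
    have hrcx : r < cx := by
      have h := min_le_left cx cy
      rw [hr0] at hrr0
      linarith [lt_min hcx hcy]
    have hrcy : r < cy := by
      have h := min_le_right cx cy
      rw [hr0] at hrr0
      linarith [lt_min hcx hcy]
    obtain ⟨i0, hi0pos, hi0max, hi0least⟩ :=
      S.exists_least_maximizer x hx hr hdx hrcx hdecx
    obtain ⟨j0, hj0pos, hj0max, hj0least⟩ :=
      S.exists_least_maximizer y hy hr hdy hrcy hdecy
    set ρ : ℝ := (p:ℝ) ^ (-r) with hρdef
    have hρpos : 0 < ρ := Real.rpow_pos_of_pos hp0 _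
    have hρne : ρ ≠ 0 := ne_of_gt hρpos
    have hρzpow : ∀ i : ℤ, ρ ^ i = (p:ℝ) ^ (-r * (i:ℝ)) := by
      intro i
      rw [hρdef, ← Real.rpow_intCast ((p:ℝ) ^ (-r)) i, ← Real.rpow_mul (le_of_lt hp0)]
    set A : ℤ → ℝ := fun i => S.abv (S.coeff x i) with hA
    set B : ℤ → ℝ := fun j => S.abv (S.coeff y j) with hB
    set n : ℤ := i0 + j0 with hndef
    have hnj0 : n - i0 = j0 := by omega
    have hsplit : ∀ i : ℤ,
        A i * B (n - i) * ρ ^ n = (A i * ρ ^ i) * (B (n - i) * ρ ^ (n - i)) := by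
      intro i
      have hzz : ρ ^ i * ρ ^ (n - i) = ρ ^ n := by
        rw [← zpow_add₀ hρne]
        congr 1
        omega
      calc A i * B (n - i) * ρ ^ n = (A i * B (n - i)) * (ρ ^ i * ρ ^ (n - i)) := by
            rw [hzz]
      _ = (A i * ρ ^ i) * (B (n - i) * ρ ^ (n - i)) := by ring
    have hApos : 0 < A i0 := by
      rcases mul_pos_iff.1 hi0pos with ⟨h1, _⟩ | ⟨_, h2⟩
      · exact h1
      · exact absurd (zpow_pos hρpos i0) (not_lt.2 (le_of_lt h2))
    have hBpos : 0 < B j0 := by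
      rcases mul_pos_iff.1 hj0pos with ⟨h1, _⟩ | ⟨_, h2⟩
      · exact h1
      · exact absurd (zpow_pos hρpos j0) (not_lt.2 (le_of_lt h2))
    have hterm : ∀ i : ℤ, i ≠ i0 →
        S.abv (S.coeff x i * S.coeff y (n - i))
          < S.abv (S.coeff x i0 * S.coeff y (n - i0)) := by
      intro i hne
      rw [S.abv_mul, S.abv_mul]
      have hφ : (A i * ρ ^ i) * (B (n - i) * ρ ^ (n - i))
          < (A i0 * ρ ^ i0) * (B (n - i0) * ρ ^ (n - i0)) := by
        rw [hnj0]
        rcases lt_or_gt_of_ne hne with hlt | hgt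
        · have h1 : A i * ρ ^ i < A i0 * ρ ^ i0 := hi0least i hlt
          have h2 : B (n - i) * ρ ^ (n - i) ≤ B j0 * ρ ^ j0 := hj0max (n - i)
          have hnn : 0 ≤ A i * ρ ^ i :=
            mul_nonneg (S.abv_nonneg _) (le_of_lt (zpow_pos hρpos i))
          calc (A i * ρ ^ i) * (B (n - i) * ρ ^ (n - i))
              ≤ (A i * ρ ^ i) * (B j0 * ρ ^ j0) := mul_le_mul_of_nonneg_left h2 hnn
          _ < (A i0 * ρ ^ i0) * (B j0 * ρ ^ j0) := mul_lt_mul_of_pos_right h1 hj0pos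
        · have hji : n - i < j0 := by omega
          have h1 : B (n - i) * ρ ^ (n - i) < B j0 * ρ ^ j0 := hj0least (n - i) hji
          have h2 : A i * ρ ^ i ≤ A i0 * ρ ^ i0 := hi0max i
          have hnn : 0 ≤ B (n - i) * ρ ^ (n - i) :=
            mul_nonneg (S.abv_nonneg _) (le_of_lt (zpow_pos hρpos _))
          calc (A i * ρ ^ i) * (B (n - i) * ρ ^ (n - i))
              ≤ (A i0 * ρ ^ i0) * (B (n - i) * ρ ^ (n - i)) :=
                mul_le_mul_of_nonneg_right h2 hnn
          _ < (A i0 * ρ ^ i0) * (B j0 * ρ ^ j0) := mul_lt_mul_of_pos_left h1 hi0pos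
      have h9 := hφ
      rw [← hsplit i, ← hsplit i0] at h9
      exact lt_of_mul_lt_mul_right h9 (le_of_lt (zpow_pos hρpos n))
    set V₀ : ℝ := S.abv (S.coeff x i0 * S.coeff y (n - i0)) with hV₀
    have hV₀eq : V₀ = A i0 * B j0 := by rw [hV₀, S.abv_mul, hnj0]
    have hV₀pos : 0 < V₀ := by rw [hV₀eq]; exact mul_pos hApos hBpos
    have hsum : ∀ T : Finset ℤ, i0 ∈ T →
        S.abv (∑ i ∈ T, S.coeff x i * S.coeff y (n - i)) = V₀ := by
      intro T hi0T
      rw [← Finset.add_sum_erase _ _ hi0T]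
      refine S.abv_add_eq ?_
      refine S.abv_sum_lt _ _ hV₀pos ?_
      intro i hi
      exact hterm i (Finset.ne_of_mem_erase hi)
    have hεm : 0 < min V₀ 1 := lt_min hV₀pos one_pos
    obtain ⟨T0, hT0⟩ := S.coeff_mul x y n (min V₀ 1) hεm
    have h1 := hT0 (T0 ∪ {i0}) Finset.subset_union_left
    have hSig := hsum (T0 ∪ {i0}) (Finset.mem_union_right _ (Finset.mem_singleton_self i0))
    rw [hxy, S.coeff_one] at h1
    have hn0 : n = 0 := by
      by_contra hne0
      rw [if_neg hne0, zero_sub, S.abv_neg, hSig] at h1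
      have := min_le_left V₀ 1
      linarith
    rw [if_pos hn0] at h1
    have hV₀le : V₀ ≤ 1 := by
      by_contra hgt
      push_neg at hgt
      set Sig0 := ∑ i ∈ T0 ∪ {i0}, S.coeff x i * S.coeff y (n - i) with hSig0
      have h3 : S.abv (Sig0 - 1) < 1 := by
        rw [S.abv_sub_comm]
        exact lt_of_lt_of_le h1 (min_le_right _ _)
      have heq : (1:S.F) + (Sig0 - 1) = Sig0 := by ring
      have h2 := S.abv_add_le 1 (Sig0 - 1)
      rw [heq, S.abv_one] at h2
      have h4 : S.abv Sig0 ≤ 1 := le_trans h2 (max_le le_rfl (le_of_lt h3))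
      rw [hSig] at h4
      linarith
    have hmain : (A i0 * ρ ^ i0) * (B j0 * ρ ^ j0) ≤ 1 := by
      have h5 := hsplit i0
      rw [hnj0] at h5
      rw [hn0, zpow_zero, mul_one] at h5
      rw [← h5, ← hV₀eq]
      exact hV₀le
    have hle : (A i * ρ ^ i) * (B j * ρ ^ j) ≤ 1 := by
      refine le_trans ?_ hmain
      exact mul_le_mul (hi0max i) (hj0max j)
        (mul_nonneg (S.abv_nonneg _) (le_of_lt (zpow_pos hρpos j))) (le_of_lt hi0pos)
    have hρij : 0 < ρ ^ i * ρ ^ j := mul_pos (zpow_pos hρpos i) (zpow_pos hρpos j)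
    have hle' : (A i * B j) * (ρ ^ i * ρ ^ j) ≤ 1 := by
      have heq2 : (A i * B j) * (ρ ^ i * ρ ^ j) = (A i * ρ ^ i) * (B j * ρ ^ j) := by ring
      rw [heq2]
      exact hle
    have h8 : A i * B j ≤ 1 / (ρ ^ i * ρ ^ j) := (le_div_iff₀ hρij).2 hle'
    have h9 : 1 / (ρ ^ i * ρ ^ j) = (p:ℝ) ^ (r * ((i:ℝ) + (j:ℝ))) := by
      rw [hρzpow i, hρzpow j, ← Real.rpow_add hp0, one_div,
        ← Real.rpow_neg (le_of_lt hp0)]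
      congr 1
      ring
    rw [← h9]
    exact h8
  -- conclude boundedness
  obtain ⟨j1, hj1⟩ := S.exists_coeff_ne_zero hy
  have hD : 0 < S.abv (S.coeff y j1) := S.abv_pos hj1
  refine ⟨(p:ℝ) * (S.abv (S.coeff y j1))⁻¹, fun i => ?_⟩
  rcases eq_or_ne (S.coeff x i) 0 with h0 | h0
  · rw [h0, S.abv_zero]
    positivity
  · rcases le_or_gt ((i:ℝ) + (j1:ℝ)) 0 with hs | hs
    · have h1 := key r0 hr0pos le_rfl i j1
      have h2 : (p:ℝ) ^ (r0 * ((i:ℝ) + (j1:ℝ))) ≤ 1 :=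
        Real.rpow_le_one_of_one_le_of_nonpos (le_of_lt hp1)
          (mul_nonpos_of_nonneg_of_nonpos (le_of_lt hr0pos) hs)
      have h3 : S.abv (S.coeff x i) * S.abv (S.coeff y j1) ≤ 1 := le_trans h1 h2
      have h4 : S.abv (S.coeff x i) ≤ 1 / S.abv (S.coeff y j1) := (le_div_iff₀ hD).2 h3
      calc S.abv (S.coeff x i) ≤ 1 / S.abv (S.coeff y j1) := h4
      _ = 1 * (S.abv (S.coeff y j1))⁻¹ := by rw [one_div, one_mul]
      _ ≤ (p:ℝ) * (S.abv (S.coeff y j1))⁻¹ := by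
            apply mul_le_mul_of_nonneg_right (le_of_lt hp1)
            positivity
    · set s : ℝ := (i:ℝ) + (j1:ℝ) with hsdef
      set r : ℝ := min r0 (1 / s) with hrdef
      have hrpos : 0 < r := lt_min hr0pos (by positivity)
      have h1 := key r hrpos (min_le_left _ _) i j1
      have h2 : r * s ≤ 1 := by
        have h2a : r ≤ 1 / s := min_le_right _ _
        calc r * s ≤ (1 / s) * s := mul_le_mul_of_nonneg_right h2a (le_of_lt hs)
        _ = 1 := by field_simp
      have h3 : (p:ℝ) ^ (r * s) ≤ (p:ℝ) := by
        calc (p:ℝ) ^ (r * s) ≤ (p:ℝ) ^ (1:ℝ) :=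
              Real.rpow_le_rpow_of_exponent_le (le_of_lt hp1) h2
        _ = (p:ℝ) := Real.rpow_one _
      have h4 : S.abv (S.coeff x i) * S.abv (S.coeff y j1) ≤ (p:ℝ) := le_trans h1 h3
      have h5 : S.abv (S.coeff x i) ≤ (p:ℝ) / S.abv (S.coeff y j1) := (le_div_iff₀ hD).2 h4
      rwa [div_eq_mul_inv] at h5

end Aux

/-- Coefficients of the inverse of a power series with constant coefficient `1`. -/
noncomputable def ginv {p : ℕ} [Fact p.Prime] (S : AnSetting p) (e : ℤ → S.F) : ℕ → S.F
  | 0 => 1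
  | (n+1) => -∑ j ∈ (Finset.range (n+1)).attach,
      e (((n+1 : ℕ) : ℤ) - ((j : ℕ) : ℤ)) * S.ginv e (j : ℕ)
  decreasing_by exact Finset.mem_range.1 j.2

section Aux2

variable {p : ℕ} [Fact p.Prime] (S : AnSetting p)

lemma ginv_abv_le {e : ℤ → S.F} (he : ∀ i : ℤ, S.abv (e i) ≤ 1) :
    ∀ n : ℕ, S.abv (S.ginv e n) ≤ 1 := by
  intro n
  induction n using Nat.strong_induction_on with
  | _ n ih =>
    match n with
    | 0 => rw [ginv, S.abv_one]
    | (n+1) =>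
      rw [ginv, S.abv_neg]
      refine S.abv_sum_le _ _ zero_le_one ?_
      intro j _
      rw [S.abv_mul]
      exact mul_le_one₀ (he _) (S.abv_nonneg _) (ih _ (Finset.mem_range.1 j.2))

lemma ginv_sum {e : ℤ → S.F} (he0 : e 0 = 1) (N : ℕ) :
    ∑ k ∈ Finset.range (N+1), e (k:ℤ) * S.ginv e (N - k)
      = if N = 0 then 1 else 0 := by
  match N with
  | 0 => simp [ginv, he0]
  | (M+1) =>
    rw [if_neg (Nat.succ_ne_zero M)]
    rw [Finset.sum_range_succ' (fun k => e (k:ℤ) * S.ginv e (M + 1 - k)) (M+1)]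
    have h0term : e ((0:ℕ):ℤ) * S.ginv e (M + 1 - 0) = S.ginv e (M+1) := by
      norm_num [he0]
    rw [h0term]
    have hrefl : ∑ i ∈ Finset.range (M+1), e ((i+1 : ℕ):ℤ) * S.ginv e (M + 1 - (i+1))
        = ∑ j ∈ Finset.range (M+1), e (((M+1 : ℕ):ℤ) - (j:ℤ)) * S.ginv e j := by
      rw [← Finset.sum_range_reflect (fun j => e (((M+1 : ℕ):ℤ) - (j:ℤ)) * S.ginv e j) (M+1)]
      refine Finset.sum_congr rfl ?_
      intro i hi
      have hiM : i ≤ M := Nat.lt_succ_iff.1 (Finset.mem_range.1 hi)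
      have h1 : ((M+1 : ℕ):ℤ) - ((M + 1 - 1 - i : ℕ):ℤ) = ((i+1 : ℕ):ℤ) := by
        have : M + 1 - 1 - i = M - i := by omega
        rw [this]
        have : ((M - i : ℕ):ℤ) = (M:ℤ) - (i:ℤ) := by
          rw [Int.ofNat_sub hiM]
        rw [this]
        push_cast
        ring
      have h2 : M + 1 - 1 - i = M - i := by omega
      rw [h1, h2]
      congr 1
      · congr 1
        omega
    have hginv : S.ginv e (M+1)
        = -∑ j ∈ Finset.range (M+1), e (((M+1 : ℕ):ℤ) - (j:ℤ)) * S.ginv e j := by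
      rw [ginv]
      rw [neg_inj]
      rw [← Finset.sum_attach (Finset.range (M+1))
        (fun j => e (((M+1 : ℕ):ℤ) - (j:ℤ)) * S.ginv e j)]
    rw [hrefl, hginv]
    ring


/-- A series with constant coefficient `1`, integral coefficients, and all negative
coefficients of absolute value `< 1` is a unit. -/
lemma isUnit_of_normalized {y : S.Γac} (he0 : S.coeff y 0 = 1)
    (hle : ∀ n : ℤ, S.abv (S.coeff y n) ≤ 1)
    (hlt : ∀ n : ℤ, n < 0 → S.abv (S.coeff y n) < 1) :
    IsUnit y := by
  have hp0 : (0:ℝ) < (p:ℝ) := S.pR_pos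
  have hp1 : (1:ℝ) < (p:ℝ) := S.one_lt_pR
  have hm : (0:ℝ) < (S.m:ℝ) := by exact_mod_cast S.m_pos
  set q : ℝ := (p:ℝ) ^ (-(1:ℝ)/(S.m:ℝ)) with hqdef
  have hq0 : 0 < q := Real.rpow_pos_of_pos hp0 _
  have hq1 : q < 1 :=
    Real.rpow_lt_one_of_one_lt_of_neg hp1 (div_neg_of_neg_of_pos (by norm_num) hm)
  have hqn : ∀ n : ℤ, n < 0 → S.abv (S.coeff y n) ≤ q := fun n hn =>
    S.abv_le_q_of_lt_one (hlt n hn)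
  obtain ⟨cy, dy, hcy, hdy, hdec⟩ := S.coeff_decay y
  -- the inverse u of the plus-part
  have hg1 : ∀ n, S.abv (S.ginv (S.coeff y) n) ≤ 1 := S.ginv_abv_le hle
  have hugrow : ∀ ε : ℝ, 0 < ε → ∃ N : ℤ, 0 ≤ N ∧ ∀ n : ℤ, N ≤ n →
      S.abv ((fun i : ℤ => if 0 ≤ i then S.ginv (S.coeff y) i.toNat else 0) n)
        ≤ (1 + ε) ^ n := by
    intro ε hε
    refine ⟨0, le_rfl, fun n hn => ?_⟩
    have h1 : (1:ℝ) ≤ (1 + ε) ^ n := by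
      rw [← Int.toNat_of_nonneg hn, zpow_natCast]
      exact one_le_pow₀ (by linarith)
    simp only []
    rw [if_pos hn]
    exact le_trans (hg1 _) h1
  have hudecay : ∃ c d : ℝ, 0 < c ∧ 0 < d ∧ ∀ n : ℤ, n < 0 →
      S.abv ((fun i : ℤ => if 0 ≤ i then S.ginv (S.coeff y) i.toNat else 0) n)
        ≤ (p:ℝ) ^ (c * (n:ℝ) + d) := by
    refine ⟨1, 1, one_pos, one_pos, fun n hn => ?_⟩
    simp only []
    rw [if_neg (by omega), S.abv_zero]
    positivity
  obtain ⟨u, hu⟩ := S.coeff_surjective _ hugrow hudecay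
  have hucoeff : ∀ i : ℤ, S.coeff u i = if 0 ≤ i then S.ginv (S.coeff y) i.toNat else 0 :=
    fun i => by simp only [hu]
  have hule : ∀ i : ℤ, S.abv (S.coeff u i) ≤ 1 := by
    intro i
    rw [hucoeff]
    by_cases h : 0 ≤ i
    · rw [if_pos h]; exact hg1 _
    · rw [if_neg h, S.abv_zero]; norm_num
  have husupp : ∀ i : ℤ, i < 0 → S.coeff u i = 0 := fun i hi => by
    rw [hucoeff, if_neg (by omega)]
  -- P: plus part of y
  have hPgrow : ∀ ε : ℝ, 0 < ε → ∃ N : ℤ, 0 ≤ N ∧ ∀ n : ℤ, N ≤ n →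
      S.abv ((fun i : ℤ => if 0 ≤ i then S.coeff y i else 0) n) ≤ (1 + ε) ^ n := by
    intro ε hε
    obtain ⟨N, hN0, hN⟩ := S.coeff_growth y ε hε
    refine ⟨N, hN0, fun n hn => ?_⟩
    simp only []
    rw [if_pos (by omega)]
    exact hN n hn
  have hPdecay : ∃ c d : ℝ, 0 < c ∧ 0 < d ∧ ∀ n : ℤ, n < 0 →
      S.abv ((fun i : ℤ => if 0 ≤ i then S.coeff y i else 0) n)
        ≤ (p:ℝ) ^ (c * (n:ℝ) + d) := by
    refine ⟨1, 1, one_pos, one_pos, fun n hn => ?_⟩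
    simp only []
    rw [if_neg (by omega), S.abv_zero]
    positivity
  obtain ⟨P, hP⟩ := S.coeff_surjective _ hPgrow hPdecay
  have hPcoeff : ∀ i : ℤ, S.coeff P i = if 0 ≤ i then S.coeff y i else 0 :=
    fun i => by simp only [hP]
  -- P * u = 1
  have hPu : P * u = 1 := by
    apply S.coeff_injective
    funext n
    rcases lt_or_ge n 0 with hn | hn
    · rw [S.mul_coeff_eq_of_support P u n ∅ ?empty, Finset.sum_empty, S.coeff_one,
        if_neg (by omega)]
      case empty =>
        intro i _
        rcases lt_or_ge i 0 with hi | hi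
        · rw [hPcoeff, if_neg (by omega), zero_mul]
        · rw [husupp (n - i) (by omega), mul_zero]
    · rw [S.mul_coeff_eq_of_support P u n
        ((Finset.range (n.toNat+1)).image (fun k : ℕ => (k:ℤ))) ?supp]
      case supp =>
        intro i hiG
        have hi : i < 0 ∨ n < i := by
          by_contra hcon
          push_neg at hcon
          refine hiG ?_
          rw [Finset.mem_image]
          exact ⟨i.toNat, Finset.mem_range.2 (by omega), by omega⟩
        rcases hi with hi | hi
        · rw [hPcoeff, if_neg (by omega), zero_mul]
        · rw [husupp (n - i) (by omega), mul_zero]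
      rw [Finset.sum_image (by intro a _ b _ h; simp only [] at h; exact_mod_cast h)]
      have hterms : ∀ k ∈ Finset.range (n.toNat+1),
          S.coeff P ((k:ℕ):ℤ) * S.coeff u (n - ((k:ℕ):ℤ))
            = S.coeff y ((k:ℕ):ℤ) * S.ginv (S.coeff y) (n.toNat - k) := by
        intro k hk
        have hk' : k ≤ n.toNat := Nat.lt_succ_iff.1 (Finset.mem_range.1 hk)
        rw [hPcoeff, if_pos (Int.natCast_nonneg k), hucoeff, if_pos (by omega)]
        congr 2
        omega
      rw [Finset.sum_congr rfl hterms, S.ginv_sum he0 n.toNat, S.coeff_one]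
      by_cases h : n = 0
      · rw [if_pos (by omega), if_pos h]
      · rw [if_neg (by omega), if_neg h]
  -- Y = P - y, ζ = Y * u
  have hYcoeff : ∀ i : ℤ, S.coeff (P - y) i = if i < 0 then -S.coeff y i else 0 := by
    intro i
    rw [S.coeff_sub, hPcoeff]
    by_cases h : 0 ≤ i
    · rw [if_pos h, if_neg (by omega), sub_self]
    · rw [if_neg h, if_pos (by omega), zero_sub]
  have hYq : ∀ i : ℤ, S.abv (S.coeff (P - y) i) ≤ q := by
    intro i
    rw [hYcoeff]
    by_cases h : i < 0
    · rw [if_pos h, S.abv_neg]; exact hqn i h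
    · rw [if_neg h, S.abv_zero]; exact le_of_lt hq0
  have hYdec : ∀ i : ℤ, i < 0 → S.abv (S.coeff (P - y) i) ≤ (p:ℝ) ^ (cy * (i:ℝ) + dy) := by
    intro i hi
    rw [hYcoeff, if_pos hi, S.abv_neg]
    exact hdec i hi
  set ζ : S.Γac := (P - y) * u with hζdef
  have hζq : ∀ n : ℤ, S.abv (S.coeff ζ n) ≤ q := by
    intro n
    rw [hζdef]
    refine S.mul_coeff_le _ _ _ (le_of_lt hq0) ?_
    intro i
    calc S.abv (S.coeff (P - y) i) * S.abv (S.coeff u (n - i)) ≤ q * 1 :=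
      mul_le_mul (hYq i) (hule _) (S.abv_nonneg _) (le_of_lt hq0)
    _ = q := mul_one q
  have hζdec : ∀ n : ℤ, n < 0 → S.abv (S.coeff ζ n) ≤ (p:ℝ) ^ (cy * (n:ℝ) + dy) := by
    intro n hn
    rw [hζdef]
    refine S.mul_coeff_le _ _ _ (le_of_lt (Real.rpow_pos_of_pos hp0 _)) ?_
    intro i
    rcases lt_or_ge (n - i) 0 with h | h
    · rw [husupp _ h, S.abv_zero, mul_zero]
      positivity
    · have hi : i ≤ n := by omega
      calc S.abv (S.coeff (P - y) i) * S.abv (S.coeff u (n - i))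
          ≤ (p:ℝ) ^ (cy * (i:ℝ) + dy) * 1 :=
            mul_le_mul (hYdec i (by omega)) (hule _) (S.abv_nonneg _)
              (le_of_lt (Real.rpow_pos_of_pos hp0 _))
      _ = (p:ℝ) ^ (cy * (i:ℝ) + dy) := mul_one _
      _ ≤ (p:ℝ) ^ (cy * (n:ℝ) + dy) := by
            apply Real.rpow_le_rpow_of_exponent_le (le_of_lt hp1)
            have hcast : (i:ℝ) ≤ (n:ℝ) := by exact_mod_cast hi
            nlinarith
  -- interpolation exponent
  set θ : ℝ := 1/(2*dy*(S.m:ℝ)+1) with hθdef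
  have hθpos : 0 < θ := by rw [hθdef]; positivity
  have hθlt1 : θ < 1 := by
    rw [hθdef, div_lt_one (by positivity)]
    nlinarith
  have hθid : (1-θ)/(S.m:ℝ) = 2*θ*dy := by
    have hden : 2*dy*(S.m:ℝ)+1 ≠ 0 := by positivity
    rw [hθdef]
    field_simp
    ring
  have hbase : ∀ n : ℤ, S.abv (S.coeff ζ n) ≤ (p:ℝ) ^ (θ*cy*(n:ℝ) - θ*dy) := by
    intro n
    have hinterp : S.abv (S.coeff ζ n) ≤ q ^ (1-θ) * ((p:ℝ) ^ (cy*(n:ℝ)+dy)) ^ θ := by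
      rcases lt_or_ge n 0 with hn | hn
      · rcases eq_or_lt_of_le (S.abv_nonneg (S.coeff ζ n)) with h0 | h0
        · rw [← h0]
          exact le_of_lt (mul_pos (Real.rpow_pos_of_pos hq0 _)
            (Real.rpow_pos_of_pos (Real.rpow_pos_of_pos hp0 _) _))
        · have h1 : S.abv (S.coeff ζ n) ≤ q := hζq n
          have h2 : S.abv (S.coeff ζ n) ≤ (p:ℝ) ^ (cy*(n:ℝ)+dy) := hζdec n hn
          have haa : S.abv (S.coeff ζ n) ^ (1-θ) * S.abv (S.coeff ζ n) ^ θ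
              = S.abv (S.coeff ζ n) := by
            rw [← Real.rpow_add h0]
            have : (1-θ)+θ = (1:ℝ) := by ring
            rw [this, Real.rpow_one]
          calc S.abv (S.coeff ζ n)
              = S.abv (S.coeff ζ n) ^ (1-θ) * S.abv (S.coeff ζ n) ^ θ := haa.symm
          _ ≤ q ^ (1-θ) * ((p:ℝ) ^ (cy*(n:ℝ)+dy)) ^ θ :=
              mul_le_mul (Real.rpow_le_rpow (le_of_lt h0) h1 (by linarith))
                (Real.rpow_le_rpow (le_of_lt h0) h2 (le_of_lt hθpos))
                (Real.rpow_nonneg (le_of_lt h0) _) (Real.rpow_nonneg (le_of_lt hq0) _)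
      · have h1 : S.abv (S.coeff ζ n) ≤ q := hζq n
        have hqq : q = q ^ (1-θ) * q ^ θ := by
          rw [← Real.rpow_add hq0]
          have : (1-θ)+θ = (1:ℝ) := by ring
          rw [this, Real.rpow_one]
        have h2 : (1:ℝ) ≤ (p:ℝ) ^ (cy*(n:ℝ)+dy) := by
          apply Real.one_le_rpow (le_of_lt hp1)
          have hcast : (0:ℝ) ≤ (n:ℝ) := by exact_mod_cast hn
          nlinarith
        have h3 : q ^ θ ≤ ((p:ℝ) ^ (cy*(n:ℝ)+dy)) ^ θ :=
          Real.rpow_le_rpow (le_of_lt hq0) (le_trans (le_of_lt hq1) h2) (le_of_lt hθpos)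
        calc S.abv (S.coeff ζ n) ≤ q := h1
        _ = q ^ (1-θ) * q ^ θ := hqq
        _ ≤ q ^ (1-θ) * ((p:ℝ) ^ (cy*(n:ℝ)+dy)) ^ θ :=
            mul_le_mul_of_nonneg_left h3 (Real.rpow_nonneg (le_of_lt hq0) _)
    refine le_trans hinterp (le_of_eq ?_)
    rw [hqdef, ← Real.rpow_mul (le_of_lt hp0) (-(1:ℝ)/(S.m:ℝ)) (1-θ),
      ← Real.rpow_mul (le_of_lt hp0) (cy*(n:ℝ)+dy) θ, ← Real.rpow_add hp0]
    congr 1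
    have h4 : (-(1:ℝ)/(S.m:ℝ))*(1-θ) = -((1-θ)/(S.m:ℝ)) := by ring
    rw [h4, hθid]
    ring
  -- bounds on powers of ζ
  have hpowq : ∀ k : ℕ, ∀ n : ℤ, S.abv (S.coeff (ζ^(k+1)) n) ≤ q^(k+1) := by
    intro k
    induction k with
    | zero =>
      intro n
      rw [pow_one, pow_one]
      exact hζq n
    | succ k ih =>
      intro n
      rw [pow_succ]
      refine S.mul_coeff_le _ _ _ (by positivity) ?_
      intro i
      calc S.abv (S.coeff (ζ^(k+1)) i) * S.abv (S.coeff ζ (n - i)) ≤ q^(k+1) * q :=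
        mul_le_mul (ih i) (hζq _) (S.abv_nonneg _) (by positivity)
      _ = q^(k+1+1) := by ring
  have hpowd : ∀ k : ℕ, ∀ n : ℤ,
      S.abv (S.coeff (ζ^(k+1)) n) ≤ (p:ℝ) ^ (θ*cy*(n:ℝ) - ((k:ℝ)+1)*(θ*dy)) := by
    intro k
    induction k with
    | zero =>
      intro n
      rw [pow_one]
      refine le_trans (hbase n) (le_of_eq ?_)
      congr 1
      push_cast
      ring
    | succ k ih =>
      intro n
      rw [pow_succ]
      refine S.mul_coeff_le _ _ _ (by positivity) ?_
      intro i
      calc S.abv (S.coeff (ζ^(k+1)) i) * S.abv (S.coeff ζ (n - i))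
          ≤ (p:ℝ) ^ (θ*cy*(i:ℝ) - ((k:ℝ)+1)*(θ*dy))
            * (p:ℝ) ^ (θ*cy*((n:ℝ)-(i:ℝ)) - θ*dy) := by
            refine mul_le_mul (ih i) ?_ (S.abv_nonneg _) (by positivity)
            refine le_trans (hbase (n-i)) (le_of_eq ?_)
            congr 1
            push_cast
            ring
      _ = (p:ℝ) ^ (θ*cy*(n:ℝ) - (((k+1:ℕ):ℝ)+1)*(θ*dy)) := by
            rw [← Real.rpow_add hp0]
            congr 1
            push_cast
            ring
  -- partial geometric sums
  set w : ℕ → S.Γac := fun K => ∑ k ∈ Finset.range (K+1), ζ^k with hwdef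
  have hwcoeff : ∀ K j, S.coeff (w K) j = ∑ k ∈ Finset.range (K+1), S.coeff (ζ^k) j := by
    intro K j
    simp only [hwdef]
    exact S.coeff_finsetSum _ _ j
  have hwle1 : ∀ K j, S.abv (S.coeff (w K) j) ≤ 1 := by
    intro K j
    rw [hwcoeff]
    refine S.abv_sum_le _ _ zero_le_one ?_
    intro k _
    match k with
    | 0 =>
      rw [pow_zero, S.coeff_one]
      by_cases h : j = 0
      · rw [if_pos h, S.abv_one]
      · rw [if_neg h, S.abv_zero]; norm_num
    | (k+1) =>
      exact le_trans (hpowq k j) (pow_le_one₀ (le_of_lt hq0) (le_of_lt hq1))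
  have hwdec : ∀ K j, j < 0 → S.abv (S.coeff (w K) j) ≤ (p:ℝ) ^ (θ*cy*(j:ℝ) - θ*dy) := by
    intro K j hj
    rw [hwcoeff]
    refine S.abv_sum_le _ _ (le_of_lt (Real.rpow_pos_of_pos hp0 _)) ?_
    intro k _
    match k with
    | 0 =>
      rw [pow_zero, S.coeff_one, if_neg (by omega), S.abv_zero]
      positivity
    | (k+1) =>
      refine le_trans (hpowd k j) ?_
      apply Real.rpow_le_rpow_of_exponent_le (le_of_lt hp1)
      have hk0 : (0:ℝ) ≤ (k:ℝ) := Nat.cast_nonneg k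
      nlinarith [mul_pos hθpos hdy]
  have hwdiff : ∀ K K' : ℕ, K ≤ K' → ∀ j,
      S.abv (S.coeff (w K') j - S.coeff (w K) j) ≤ q^(K+1) := by
    intro K K' hKK j
    have hsub : S.coeff (w K') j - S.coeff (w K) j
        = ∑ k ∈ Finset.Ico (K+1) (K'+1), S.coeff (ζ^k) j := by
      rw [hwcoeff, hwcoeff]
      exact (Finset.sum_Ico_eq_sub _ (by omega)).symm
    rw [hsub]
    refine S.abv_sum_le _ _ (by positivity) ?_
    intro k hk
    rw [Finset.mem_Ico] at hk
    match k, hk with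
    | 0, hk => exact absurd hk.1 (by omega)
    | (k+1), hk =>
      refine le_trans (hpowq k j) ?_
      exact pow_le_pow_of_le_one (le_of_lt hq0) (le_of_lt hq1) (by omega)
  -- coefficientwise limit
  have hcauchy : ∀ j : ℤ, ∃ L : S.F, ∀ ε : ℝ, 0 < ε → ∃ N : ℕ, ∀ a ≥ N,
      S.abv (S.coeff (w a) j - L) < ε := by
    intro j
    have hcau : ∀ ε : ℝ, 0 < ε → ∃ N : ℕ, ∀ a ≥ N, ∀ b ≥ N,
        S.abv (S.coeff (w a) j - S.coeff (w b) j) < ε := by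
      intro ε hε
      obtain ⟨N, hN⟩ := exists_pow_lt_of_lt_one hε hq1
      refine ⟨N, fun a ha b hb => ?_⟩
      rcases le_total a b with hab | hab
      · rw [S.abv_sub_comm]
        refine lt_of_le_of_lt (hwdiff a b hab j) ?_
        calc q^(a+1) ≤ q^N :=
              pow_le_pow_of_le_one (le_of_lt hq0) (le_of_lt hq1) (by omega)
        _ < ε := hN
      · refine lt_of_le_of_lt (hwdiff b a hab j) ?_
        calc q^(b+1) ≤ q^N :=
              pow_le_pow_of_le_one (le_of_lt hq0) (le_of_lt hq1) (by omega)
        _ < ε := hN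
    obtain ⟨L, hL⟩ := S.complete (fun K => S.coeff (w K) j) hcau
    exact ⟨L, hL⟩
  choose hfun hconv using hcauchy
  have hdist : ∀ (j : ℤ) (K : ℕ), S.abv (S.coeff (w K) j - hfun j) ≤ q^(K+1) := by
    intro j K
    by_contra hcon
    push_neg at hcon
    have hqK : (0:ℝ) ≤ q^(K+1) := by positivity
    obtain ⟨N, hN⟩ := hconv j ((S.abv (S.coeff (w K) j - hfun j) - q^(K+1))/2) (by linarith)
    have h1 := hN (max N K) (le_max_left _ _)
    have h5 : S.abv (S.coeff (w K) j - S.coeff (w (max N K)) j) ≤ q^(K+1) := by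
      rw [S.abv_sub_comm]
      exact hwdiff K (max N K) (le_max_right _ _) j
    have h3 := S.abv_add_le (S.coeff (w (max N K)) j - hfun j)
      (S.coeff (w K) j - S.coeff (w (max N K)) j)
    have heq : (S.coeff (w (max N K)) j - hfun j)
        + (S.coeff (w K) j - S.coeff (w (max N K)) j) = S.coeff (w K) j - hfun j := by ring
    rw [heq] at h3
    rcases le_max_iff.1 h3 with h4 | h4
    · linarith
    · linarith
  have hfun_le1 : ∀ j, S.abv (hfun j) ≤ 1 := by
    intro j
    have h3 := S.abv_add_le (hfun j - S.coeff (w 0) j) (S.coeff (w 0) j)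
    rw [sub_add_cancel] at h3
    refine le_trans h3 (max_le ?_ (hwle1 0 j))
    rw [S.abv_sub_comm]
    refine le_trans (hdist j 0) ?_
    calc q^(0+1) = q := pow_one q
    _ ≤ 1 := le_of_lt hq1
  have hfun_dec : ∀ j : ℤ, j < 0 → S.abv (hfun j) ≤ (p:ℝ) ^ ((θ*cy) * (j:ℝ) + dy) := by
    intro j hj
    have hγpos : (0:ℝ) < (p:ℝ) ^ (θ*cy*(j:ℝ) - θ*dy) := Real.rpow_pos_of_pos hp0 _
    obtain ⟨N, hN⟩ := exists_pow_lt_of_lt_one hγpos hq1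
    have hK : q^(N+1) ≤ (p:ℝ) ^ (θ*cy*(j:ℝ) - θ*dy) := by
      calc q^(N+1) ≤ q^N := pow_le_pow_of_le_one (le_of_lt hq0) (le_of_lt hq1) (by omega)
      _ ≤ _ := le_of_lt hN
    have h3 := S.abv_add_le (hfun j - S.coeff (w N) j) (S.coeff (w N) j)
    rw [sub_add_cancel] at h3
    have h4 : S.abv (hfun j) ≤ (p:ℝ) ^ (θ*cy*(j:ℝ) - θ*dy) := by
      refine le_trans h3 (max_le ?_ (hwdec N j hj))
      rw [S.abv_sub_comm]
      exact le_trans (hdist j N) hK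
    refine le_trans h4 ?_
    apply Real.rpow_le_rpow_of_exponent_le (le_of_lt hp1)
    nlinarith [mul_pos hθpos hdy]
  -- the limit H
  have hHgrow : ∀ ε : ℝ, 0 < ε → ∃ N : ℤ, 0 ≤ N ∧ ∀ n : ℤ, N ≤ n →
      S.abv (hfun n) ≤ (1 + ε) ^ n := by
    intro ε hε
    refine ⟨0, le_rfl, fun n hn => ?_⟩
    refine le_trans (hfun_le1 n) ?_
    rw [← Int.toNat_of_nonneg hn, zpow_natCast]
    exact one_le_pow₀ (by linarith)
  have hHdecay : ∃ c d : ℝ, 0 < c ∧ 0 < d ∧ ∀ n : ℤ, n < 0 →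
      S.abv (hfun n) ≤ (p:ℝ) ^ (c * (n:ℝ) + d) :=
    ⟨θ*cy, dy, mul_pos hθpos hcy, hdy, fun n hn => hfun_dec n hn⟩
  obtain ⟨H, hH⟩ := S.coeff_surjective hfun hHgrow hHdecay
  -- y * u = 1 - ζ
  have hyu : y * u = 1 - ζ := by
    rw [hζdef]
    have hexp : (P - y) * u = P * u - y * u := by ring
    rw [hexp, hPu]
    ring
  have hyule : ∀ i : ℤ, S.abv (S.coeff (y*u) i) ≤ 1 := by
    intro i
    rw [hyu, S.coeff_sub, sub_eq_add_neg]
    refine le_trans (S.abv_add_le _ _) (max_le ?_ ?_)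
    · rw [S.coeff_one]
      by_cases h : i = 0
      · rw [if_pos h, S.abv_one]
      · rw [if_neg h, S.abv_zero]; norm_num
    · rw [S.abv_neg]
      exact le_trans (hζq i) (le_of_lt hq1)
  have hprod : ∀ K : ℕ, (y * u) * (w K) = 1 - ζ^(K+1) := by
    intro K
    rw [hyu]
    simp only [hwdef]
    have hgeom := geom_sum_mul ζ (K+1)
    linear_combination -hgeom
  -- final verification
  have hfinal : (y * u) * H = 1 := by
    apply S.coeff_injective
    funext n
    apply S.eq_of_forall_abv_sub_lt
    intro ε hε
    obtain ⟨K, hNK⟩ := exists_pow_lt_of_lt_one hε hq1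
    have hKε : q^(K+1) < ε :=
      lt_of_le_of_lt (pow_le_pow_of_le_one (le_of_lt hq0) (le_of_lt hq1) (by omega)) hNK
    obtain ⟨S1, hS1⟩ := S.coeff_mul (y*u) H n ε hε
    obtain ⟨S2, hS2⟩ := S.coeff_mul (y*u) (w K) n ε hε
    have h1 := hS1 (S1 ∪ S2) Finset.subset_union_left
    have h2 := hS2 (S1 ∪ S2) Finset.subset_union_right
    have hAB : S.abv ((∑ i ∈ S1 ∪ S2, S.coeff (y*u) i * S.coeff H (n - i))
        - ∑ i ∈ S1 ∪ S2, S.coeff (y*u) i * S.coeff (w K) (n - i)) ≤ q^(K+1) := by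
      rw [← Finset.sum_sub_distrib]
      refine S.abv_sum_le _ _ (by positivity) ?_
      intro i _
      rw [← mul_sub, S.abv_mul]
      calc S.abv (S.coeff (y*u) i) * S.abv (S.coeff H (n-i) - S.coeff (w K) (n-i))
          ≤ 1 * q^(K+1) := by
            refine mul_le_mul (hyule i) ?_ (S.abv_nonneg _) zero_le_one
            rw [hH, S.abv_sub_comm]
            exact hdist (n-i) K
      _ = q^(K+1) := one_mul _
    have h3 : S.abv (S.coeff ((y*u)*(w K)) n - S.coeff 1 n) ≤ q^(K+1) := by
      rw [hprod K, S.coeff_sub]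
      have heq : S.coeff 1 n - S.coeff (ζ^(K+1)) n - S.coeff 1 n
          = -(S.coeff (ζ^(K+1)) n) := by ring
      rw [heq, S.abv_neg]
      exact hpowq K n
    have hchain : ∀ a b c : S.F, S.abv (a - c) ≤ max (S.abv (a - b)) (S.abv (b - c)) := by
      intro a b c
      have h := S.abv_add_le (a - b) (b - c)
      rwa [sub_add_sub_cancel] at h
    have e2 : S.abv ((∑ i ∈ S1 ∪ S2, S.coeff (y*u) i * S.coeff H (n - i))
        - ∑ i ∈ S1 ∪ S2, S.coeff (y*u) i * S.coeff (w K) (n - i)) < ε :=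
      lt_of_le_of_lt hAB hKε
    have e3 : S.abv ((∑ i ∈ S1 ∪ S2, S.coeff (y*u) i * S.coeff (w K) (n - i))
        - S.coeff ((y*u)*(w K)) n) < ε := by
      rw [S.abv_sub_comm]
      exact h2
    have e4 : S.abv (S.coeff ((y*u)*(w K)) n - S.coeff 1 n) < ε := lt_of_le_of_lt h3 hKε
    refine lt_of_le_of_lt (hchain _ (∑ i ∈ S1 ∪ S2, S.coeff (y*u) i * S.coeff H (n - i)) _)
      (max_lt h1 ?_)
    refine lt_of_le_of_lt (hchain _ (∑ i ∈ S1 ∪ S2, S.coeff (y*u) i * S.coeff (w K) (n - i)) _)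
      (max_lt e2 ?_)
    exact lt_of_le_of_lt (hchain _ (S.coeff ((y*u)*(w K)) n) _) (max_lt e3 e4)
  exact IsUnit.of_mul_eq_one (a := y) (u * H) (by rw [← mul_assoc]; exact hfinal)


/-- A nonzero element with bounded coefficients is a unit. -/
lemma isUnit_of_bounded {x : S.Γac} (hx : x ≠ 0) {C : ℝ}
    (hC : ∀ i : ℤ, S.abv (S.coeff x i) ≤ C) : IsUnit x := by
  have hp0 : (0:ℝ) < (p:ℝ) := S.pR_pos
  have hp1 : (1:ℝ) < (p:ℝ) := S.one_lt_pR
  have hm : (0:ℝ) < (S.m:ℝ) := by exact_mod_cast S.m_pos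
  obtain ⟨i1, hi1⟩ := S.exists_coeff_ne_zero hx
  have hCpos : 0 < C := lt_of_lt_of_le (S.abv_pos hi1) (hC i1)
  obtain ⟨k1, hk1⟩ := S.abv_discrete _ hi1
  have hEne : ∃ k : ℤ, ∃ i : ℤ, S.abv (S.coeff x i) = (p:ℝ) ^ ((k:ℝ)/(S.m:ℝ)) :=
    ⟨k1, i1, hk1⟩
  have hEbdd : ∃ b : ℤ, ∀ k : ℤ,
      (∃ i : ℤ, S.abv (S.coeff x i) = (p:ℝ) ^ ((k:ℝ)/(S.m:ℝ))) → k ≤ b := by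
    refine ⟨⌊(S.m:ℝ) * Real.logb (p:ℝ) C⌋, ?_⟩
    rintro k ⟨i, hi⟩
    have h1 : (p:ℝ) ^ ((k:ℝ)/(S.m:ℝ)) ≤ C := hi ▸ hC i
    have h2 : (k:ℝ)/(S.m:ℝ) ≤ Real.logb (p:ℝ) C :=
      (Real.le_logb_iff_rpow_le hp1 hCpos).2 h1
    have h3 : (k:ℝ) ≤ (S.m:ℝ) * Real.logb (p:ℝ) C := by
      rw [div_le_iff₀ hm] at h2
      linarith
    exact Int.le_floor.2 h3
  obtain ⟨kmax, hkmaxE, hkmax⟩ := Int.exists_greatest_of_bdd hEbdd hEne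
  obtain ⟨imax, himax⟩ := hkmaxE
  have hvpos : (0:ℝ) < (p:ℝ) ^ ((kmax:ℝ)/(S.m:ℝ)) := Real.rpow_pos_of_pos hp0 _
  have hvmax : ∀ i : ℤ, S.abv (S.coeff x i) ≤ (p:ℝ) ^ ((kmax:ℝ)/(S.m:ℝ)) := by
    intro i
    rcases eq_or_ne (S.coeff x i) 0 with h0 | h0
    · rw [h0, S.abv_zero]
      exact le_of_lt hvpos
    · obtain ⟨k, hk⟩ := S.abv_discrete _ h0
      have hkk := hkmax k ⟨i, hk⟩
      rw [hk]
      apply Real.rpow_le_rpow_of_exponent_le (le_of_lt hp1)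
      have hcast : (k:ℝ) ≤ (kmax:ℝ) := by exact_mod_cast hkk
      rw [div_le_div_iff₀ hm hm]
      nlinarith
  obtain ⟨cx, dx, hcx, hdx, hdecx⟩ := S.coeff_decay x
  have hbddbelow : ∀ z : ℤ, S.abv (S.coeff x z) = (p:ℝ) ^ ((kmax:ℝ)/(S.m:ℝ)) →
      min 0 ⌊((kmax:ℝ)/(S.m:ℝ) - dx)/cx⌋ ≤ z := by
    intro z hz
    by_contra hcon
    push_neg at hcon
    have hz0 : z < 0 := by
      have := min_le_left 0 ⌊((kmax:ℝ)/(S.m:ℝ) - dx)/cx⌋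
      omega
    have h1 := hdecx z hz0
    have h2 : (z:ℝ) < ((kmax:ℝ)/(S.m:ℝ) - dx)/cx := by
      have hz1 : z < ⌊((kmax:ℝ)/(S.m:ℝ) - dx)/cx⌋ := by
        have := min_le_right (0:ℤ) ⌊((kmax:ℝ)/(S.m:ℝ) - dx)/cx⌋
        omega
      have hz2 : (z:ℝ) ≤ (⌊((kmax:ℝ)/(S.m:ℝ) - dx)/cx⌋ : ℝ) - 1 := by
        have : z ≤ ⌊((kmax:ℝ)/(S.m:ℝ) - dx)/cx⌋ - 1 := by omega
        exact_mod_cast this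
      linarith [Int.floor_le (((kmax:ℝ)/(S.m:ℝ) - dx)/cx)]
    have h3 : cx * (z:ℝ) + dx < (kmax:ℝ)/(S.m:ℝ) := by
      rw [lt_div_iff₀ hcx] at h2
      linarith
    have h4 : S.abv (S.coeff x z) < (p:ℝ) ^ ((kmax:ℝ)/(S.m:ℝ)) :=
      lt_of_le_of_lt h1 (Real.rpow_lt_rpow_of_exponent_lt hp1 h3)
    rw [hz] at h4
    exact lt_irrefl _ h4
  obtain ⟨i0, hi0v, hi0least⟩ := Int.exists_least_of_bdd
    ⟨min 0 ⌊((kmax:ℝ)/(S.m:ℝ) - dx)/cx⌋, hbddbelow⟩ ⟨imax, himax⟩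
  have hxi0 : S.coeff x i0 ≠ 0 := by
    intro h0
    rw [h0, S.abv_zero] at hi0v
    exact absurd hi0v.symm (ne_of_gt hvpos)
  obtain ⟨W, hWunit, hWcoeff⟩ := S.exists_shift_unit (inv_ne_zero hxi0) (-i0)
  have hycoeff : ∀ n : ℤ, S.coeff (W * x) n = (S.coeff x i0)⁻¹ * S.coeff x (n + i0) := by
    intro n
    rw [S.mul_coeff_eq_of_support W x n {-i0} ?side]
    · rw [Finset.sum_singleton, hWcoeff, if_pos rfl, sub_neg_eq_add]
    case side =>
      intro i hi
      rw [hWcoeff, if_neg (by simpa using hi), zero_mul]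
  have habv : ∀ n : ℤ, S.abv (S.coeff (W*x) n)
      = S.abv (S.coeff x (n + i0)) / (p:ℝ) ^ ((kmax:ℝ)/(S.m:ℝ)) := by
    intro n
    rw [hycoeff, S.abv_mul, S.abv_inv hxi0, hi0v, inv_mul_eq_div]
  have hy0 : S.coeff (W*x) 0 = 1 := by
    rw [hycoeff, zero_add]
    exact inv_mul_cancel₀ hxi0
  have hyle : ∀ n : ℤ, S.abv (S.coeff (W*x) n) ≤ 1 := by
    intro n
    rw [habv, div_le_one hvpos]
    exact hvmax _
  have hylt : ∀ n : ℤ, n < 0 → S.abv (S.coeff (W*x) n) < 1 := by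
    intro n hn
    rw [habv, div_lt_one hvpos]
    refine lt_of_le_of_ne (hvmax _) ?_
    intro heq
    have := hi0least (n + i0) heq
    omega
  have hyunit : IsUnit (W * x) := S.isUnit_of_normalized hy0 hyle hylt
  exact isUnit_of_mul_isUnit_right hyunit

end Aux2

end AnSetting

/-- For `x = ∑ᵢ cᵢ tⁱ` a nonzero element of `Γ_{an,con}`, `x` is a unit
in `Γ_{an,con}` if and only if the set `{|cᵢ| : i ∈ ℤ}` is bounded above. -/
theorem isUnit_iff_coeff_bounded {p : ℕ} [Fact p.Prime] (S : AnSetting p)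
    (x : S.Γac) (hx : x ≠ 0) :
    IsUnit x ↔ ∃ C : ℝ, ∀ i : ℤ, S.abv (S.coeff x i) ≤ C := by
  constructor
  · intro hu
    exact S.bounded_of_isUnit hx hu
  · rintro ⟨C, hC⟩
    exact S.isUnit_of_bounded hx hC
end
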